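/- arXiv:1405.2573 — 6 statements merged into one kernel-verified Lean document; each statement's English description precedes it below -/
import Mathlib

section
/- Let b > 0. There exist a constant M_b > 0 and constants ρ¹_b, ρ²_b ∈ (0,1), depending only on b, such that for every a ∈ [−b, b] there exist a probability space and a pair of real random variables (U₁, U₂) on it with the following properties: U₁ and U₂ each have the standard Gaussian law N(0,1); ρ¹_b ≤ P(U₂ = U₁ + a) ≤ ρ²_b; P(|U₂ − U₁| ≤ M_b) = 1; and almost surely on the event {U₂ = U₁ + a} one has |U₁| ≤ M_b/2 + b and |U₂| ≤ M_b/2 + b. -/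
open MeasureTheory ProbabilityTheory

section Statement0Aux
open Set
open scoped ENNReal NNReal

noncomputable section AuxDefs


namespace S0

variable {b a : ℝ}

def dlt (b : ℝ) : ℝ := gaussianPDFReal 0 1 (1 + b) / 2

def dn (b : ℝ) : ℝ≥0∞ := ENNReal.ofReal (dlt b)

def dfun (b a : ℝ) : ℝ → ℝ≥0∞ := fun x =>
  (Icc (0:ℝ) 1).indicator (fun _ => dn b) x + (Icc a (a+1)).indicator (fun _ => dn b) x

def gfun (b a : ℝ) : ℝ → ℝ≥0∞ := fun x => gaussianPDF 0 1 x - dfun b a x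

def mug (b a : ℝ) : Measure ℝ := volume.withDensity (gfun b a)

def mun (b a : ℝ) (n : ℤ) : Measure ℝ := (mug b a).restrict (Ico (n:ℝ) (n+1))

def Pb (b a : ℝ) : Measure (ℝ × ℝ) :=
  Measure.sum fun n : ℤ => ((mun b a n) univ)⁻¹ • ((mun b a n).prod (mun b a n))

def P1 (b a : ℝ) : Measure (ℝ × ℝ) :=
  Measure.map (fun x => (x, x + a)) (dn b • volume.restrict (Icc (0:ℝ) 1))

def P2 (b a : ℝ) : Measure (ℝ × ℝ) :=
  Measure.map (fun x => (x, 1 + a - x)) (dn b • volume.restrict (Icc a (a+1)))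

def PP (b a : ℝ) : Measure (ℝ × ℝ) := Pb b a + P1 b a + P2 b a

lemma gaussianPDFReal_eq (z : ℝ) :
    gaussianPDFReal 0 1 z = (Real.sqrt (2 * Real.pi))⁻¹ * Real.exp (-(z ^ 2) / 2) := by
  simp [gaussianPDFReal]

lemma pdf_mono {x y : ℝ} (h : |x| ≤ |y|) :
    gaussianPDFReal 0 1 y ≤ gaussianPDFReal 0 1 x := by
  rw [gaussianPDFReal_eq, gaussianPDFReal_eq]
  have hx2 : x ^ 2 ≤ y ^ 2 := by
    nlinarith [sq_abs x, sq_abs y, abs_nonneg x, abs_nonneg y]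
  exact mul_le_mul_of_nonneg_left (Real.exp_le_exp.mpr (by linarith))
    (inv_nonneg.mpr (Real.sqrt_nonneg _))

lemma dlt_pos : 0 < dlt b := by
  have := gaussianPDFReal_pos 0 1 (1 + b) one_ne_zero
  unfold dlt; linarith

lemma measurable_dfun (b a : ℝ) : Measurable (dfun b a) :=
  ((measurable_const.indicator measurableSet_Icc).add
    (measurable_const.indicator measurableSet_Icc))

lemma measurable_gfun (b a : ℝ) : Measurable (gfun b a) :=
  (measurable_gaussianPDF 0 1).sub (measurable_dfun b a)

lemma dfun_le (hb : 0 < b) (ha1 : -b ≤ a) (ha2 : a ≤ b) (x : ℝ) :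
    dfun b a x ≤ gaussianPDF 0 1 x := by
  by_cases hx : x ∈ Icc (0:ℝ) 1 ∨ x ∈ Icc a (a+1)
  · have habs : |x| ≤ |1 + b| := by
      rw [abs_of_pos (by linarith : (0:ℝ) < 1 + b), abs_le]
      rcases hx with h | h
      · exact ⟨by linarith [h.1], by linarith [h.2]⟩
      · exact ⟨by linarith [h.1], by linarith [h.2]⟩
    have h1 : dfun b a x ≤ dn b + dn b :=
      add_le_add (Set.indicator_le_self _ _ x) (Set.indicator_le_self _ _ x)
    refine h1.trans ?_
    have hd : (0:ℝ) ≤ dlt b := dlt_pos.le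
    rw [show dn b + dn b = ENNReal.ofReal (dlt b + dlt b) from (ENNReal.ofReal_add hd hd).symm]
    unfold gaussianPDF
    apply ENNReal.ofReal_le_ofReal
    rw [dlt, add_halves]
    exact pdf_mono habs
  · push_neg at hx
    simp [dfun, Set.indicator_of_notMem hx.1, Set.indicator_of_notMem hx.2]

lemma gfun_add_dfun (hb : 0 < b) (ha1 : -b ≤ a) (ha2 : a ≤ b) (x : ℝ) :
    gfun b a x + dfun b a x = gaussianPDF 0 1 x :=
  tsub_add_cancel_of_le (dfun_le hb ha1 ha2 x)

lemma mug_univ_le : mug b a univ ≤ 1 := by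
  rw [mug, withDensity_apply _ MeasurableSet.univ, setLIntegral_univ]
  calc ∫⁻ x, gfun b a x ≤ ∫⁻ x, gaussianPDF 0 1 x :=
        lintegral_mono fun x => tsub_le_self
    _ = 1 := lintegral_gaussianPDF_eq_one 0 one_ne_zero

instance : IsFiniteMeasure (mug b a) :=
  ⟨lt_of_le_of_lt mug_univ_le ENNReal.one_lt_top⟩

instance (n : ℤ) : IsFiniteMeasure (mun b a n) := by
  unfold mun; infer_instance

lemma mun_univ_ne_top (n : ℤ) : (mun b a n) univ ≠ ⊤ := measure_ne_top _ _

lemma sum_mun : Measure.sum (mun b a) = mug b a := by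
  rw [← Measure.restrict_univ (μ := mug b a), ← iUnion_Ico_intCast (α := ℝ),
    Measure.restrict_iUnion (pairwise_disjoint_Ico_intCast ℝ) (fun n => measurableSet_Ico)]
  rfl

lemma map_fst_Pb : (Pb b a).map Prod.fst = mug b a := by
  rw [Pb, Measure.map_sum measurable_fst.aemeasurable]
  have h : ∀ n : ℤ, Measure.map Prod.fst (((mun b a n) univ)⁻¹ • ((mun b a n).prod (mun b a n)))
      = mun b a n := by
    intro n
    rw [Measure.map_smul, Measure.map_fst_prod]
    rcases eq_or_ne ((mun b a n) univ) 0 with h0 | h0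
    · simp [Measure.measure_univ_eq_zero.mp h0]
    · rw [smul_smul, ENNReal.inv_mul_cancel h0 (mun_univ_ne_top n), one_smul]
  simp_rw [h]
  exact sum_mun

lemma map_snd_Pb : (Pb b a).map Prod.snd = mug b a := by
  rw [Pb, Measure.map_sum measurable_snd.aemeasurable]
  have h : ∀ n : ℤ, Measure.map Prod.snd (((mun b a n) univ)⁻¹ • ((mun b a n).prod (mun b a n)))
      = mun b a n := by
    intro n
    rw [Measure.map_smul, Measure.map_snd_prod]
    rcases eq_or_ne ((mun b a n) univ) 0 with h0 | h0
    · simp [Measure.measure_univ_eq_zero.mp h0]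
    · rw [smul_smul, ENNReal.inv_mul_cancel h0 (mun_univ_ne_top n), one_smul]
  simp_rw [h]
  exact sum_mun

lemma hm1 : Measurable (fun x : ℝ => x + a) := by fun_prop

lemma hm2 : Measurable (fun x : ℝ => 1 + a - x) := by fun_prop

lemma measurable_pair1 : Measurable (fun x : ℝ => (x, x + a)) := by fun_prop

lemma measurable_pair2 : Measurable (fun x : ℝ => (x, 1 + a - x)) := by fun_prop

lemma map_fst_P1 : (P1 b a).map Prod.fst = dn b • volume.restrict (Icc (0:ℝ) 1) := by
  rw [P1, Measure.map_map measurable_fst measurable_pair1]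
  exact Measure.map_id

lemma map_fst_P2 : (P2 b a).map Prod.fst = dn b • volume.restrict (Icc a (a+1)) := by
  rw [P2, Measure.map_map measurable_fst measurable_pair2]
  exact Measure.map_id

lemma map_shift : Measure.map (fun x : ℝ => x + a) (volume.restrict (Icc (0:ℝ) 1))
    = volume.restrict (Icc a (a+1)) := by
  ext s hs
  rw [Measure.map_apply hm1 hs, Measure.restrict_apply hs,
    Measure.restrict_apply (hs.preimage hm1)]
  have h : (fun x : ℝ => x + a) ⁻¹' s ∩ Icc (0:ℝ) 1
      = (fun x : ℝ => x + a) ⁻¹' (s ∩ Icc a (a+1)) := by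
    rw [Set.preimage_inter]
    congr 1
    rw [Set.preimage_add_const_Icc]
    norm_num
  rw [h, measure_preimage_add_right]

lemma map_refl : Measure.map (fun x : ℝ => 1 + a - x) (volume.restrict (Icc a (a+1)))
    = volume.restrict (Icc (0:ℝ) 1) := by
  ext s hs
  rw [Measure.map_apply hm2 hs, Measure.restrict_apply hs,
    Measure.restrict_apply (hs.preimage hm2)]
  have h : (fun x : ℝ => 1 + a - x) ⁻¹' s ∩ Icc a (a+1)
      = (fun x : ℝ => 1 + a - x) ⁻¹' (s ∩ Icc (0:ℝ) 1) := by
    rw [Set.preimage_inter]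
    congr 1
    rw [Set.preimage_const_sub_Icc]
    norm_num [add_comm]
  rw [h]
  have h2 : (fun x : ℝ => 1 + a - x) ⁻¹' (s ∩ Icc (0:ℝ) 1)
      = Neg.neg ⁻¹' ((fun x : ℝ => x + (1+a)) ⁻¹' (s ∩ Icc (0:ℝ) 1)) := by
    ext x
    simp only [Set.mem_preimage]
    rw [show -x + (1 + a) = 1 + a - x from by ring]
  rw [h2]
  rw [Measure.measure_preimage_neg]
  exact measure_preimage_add_right volume (1+a) _

lemma map_snd_P1 : (P1 b a).map Prod.snd = dn b • volume.restrict (Icc a (a+1)) := by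
  rw [P1, Measure.map_map measurable_snd measurable_pair1]
  have h : (Prod.snd ∘ fun x : ℝ => (x, x + a)) = fun x : ℝ => x + a := rfl
  rw [h, Measure.map_smul, map_shift]

lemma map_snd_P2 : (P2 b a).map Prod.snd = dn b • volume.restrict (Icc (0:ℝ) 1) := by
  rw [P2, Measure.map_map measurable_snd measurable_pair2]
  have h : (Prod.snd ∘ fun x : ℝ => (x, 1 + a - x)) = fun x : ℝ => 1 + a - x := rfl
  rw [h, Measure.map_smul, map_refl]

lemma density_split (hb : 0 < b) (ha1 : -b ≤ a) (ha2 : a ≤ b) :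
    mug b a + (dn b • volume.restrict (Icc (0:ℝ) 1) + dn b • volume.restrict (Icc a (a+1)))
      = gaussianReal 0 1 := by
  have h1 : volume.withDensity (dfun b a)
      = dn b • volume.restrict (Icc (0:ℝ) 1) + dn b • volume.restrict (Icc a (a+1)) := by
    have hrfl : dfun b a = ((Icc (0:ℝ) 1).indicator fun _ => dn b)
        + ((Icc a (a+1)).indicator fun _ => dn b) := rfl
    rw [hrfl, withDensity_add_left (measurable_const.indicator measurableSet_Icc),
      withDensity_indicator measurableSet_Icc, withDensity_indicator measurableSet_Icc,
      withDensity_const, withDensity_const]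
  rw [← h1, mug, ← withDensity_add_left (measurable_gfun b a),
    gaussianReal_of_var_ne_zero 0 one_ne_zero]
  congr 1
  funext x
  exact gfun_add_dfun hb ha1 ha2 x

lemma map_fst_PP (hb : 0 < b) (ha1 : -b ≤ a) (ha2 : a ≤ b) :
    (PP b a).map Prod.fst = gaussianReal 0 1 := by
  rw [PP, Measure.map_add _ _ measurable_fst, Measure.map_add _ _ measurable_fst,
    map_fst_Pb, map_fst_P1, map_fst_P2, add_assoc]
  exact density_split hb ha1 ha2

lemma map_snd_PP (hb : 0 < b) (ha1 : -b ≤ a) (ha2 : a ≤ b) :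
    (PP b a).map Prod.snd = gaussianReal 0 1 := by
  rw [PP, Measure.map_add _ _ measurable_snd, Measure.map_add _ _ measurable_snd,
    map_snd_Pb, map_snd_P1, map_snd_P2, add_assoc,
    add_comm (dn b • volume.restrict (Icc a (a+1)))]
  exact density_split hb ha1 ha2


def Ev (a : ℝ) : Set (ℝ × ℝ) := {p | p.2 = p.1 + a}

lemma hEv : MeasurableSet (Ev a) :=
  measurableSet_eq_fun measurable_snd (measurable_fst.add_const a)

lemma mug_singleton (x : ℝ) : mug b a {x} = 0 :=
  withDensity_absolutelyContinuous volume (gfun b a) Real.volume_singleton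

lemma mun_singleton (n : ℤ) (x : ℝ) : mun b a n {x} = 0 := by
  rw [mun, Measure.restrict_apply (measurableSet_singleton _)]
  exact measure_mono_null Set.inter_subset_left (mug_singleton _)

lemma Pb_line : Pb b a (Ev a) = 0 := by
  rw [Pb, Measure.sum_apply _ hEv]
  refine ENNReal.tsum_eq_zero.mpr fun n => ?_
  rw [Measure.smul_apply, smul_eq_mul]
  have hz : ((mun b a n).prod (mun b a n)) (Ev a) = 0 := by
    rw [Measure.prod_apply hEv]
    have h0 : ∀ x : ℝ, (mun b a n) (Prod.mk x ⁻¹' Ev a) = 0 := by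
      intro x
      have hpre : Prod.mk x ⁻¹' Ev a = {x + a} := by ext y; simp [Ev]
      rw [hpre]
      exact mun_singleton n (x + a)
    simp [h0]
  rw [hz, mul_zero]

lemma P1_apply {s : Set (ℝ × ℝ)} (hs : MeasurableSet s) :
    P1 b a s = dn b * volume ((fun x : ℝ => (x, x + a)) ⁻¹' s ∩ Icc (0:ℝ) 1) := by
  rw [P1, Measure.map_apply measurable_pair1 hs, Measure.smul_apply,
    Measure.restrict_apply (hs.preimage measurable_pair1), smul_eq_mul]

lemma P2_apply {s : Set (ℝ × ℝ)} (hs : MeasurableSet s) :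
    P2 b a s = dn b * volume ((fun x : ℝ => (x, 1 + a - x)) ⁻¹' s ∩ Icc a (a+1)) := by
  rw [P2, Measure.map_apply measurable_pair2 hs, Measure.smul_apply,
    Measure.restrict_apply (hs.preimage measurable_pair2), smul_eq_mul]

lemma P1_line : P1 b a (Ev a) = dn b := by
  rw [P1_apply hEv]
  have hpre : (fun x : ℝ => (x, x + a)) ⁻¹' Ev a = univ := by
    ext x; simp [Ev]
  rw [hpre, Set.univ_inter, Real.volume_Icc]
  norm_num

lemma P2_line : P2 b a (Ev a) = 0 := by
  rw [P2_apply hEv]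
  have hpre : (fun x : ℝ => (x, 1 + a - x)) ⁻¹' Ev a = {(1:ℝ)/2} := by
    ext x
    simp only [Ev, Set.mem_preimage, Set.mem_setOf_eq, Set.mem_singleton_iff]
    constructor <;> intro h <;> linarith
  rw [hpre]
  rw [measure_mono_null Set.inter_subset_left Real.volume_singleton, mul_zero]

lemma PP_line : PP b a (Ev a) = dn b := by
  rw [PP, Measure.add_apply, Measure.add_apply, Pb_line, P1_line, P2_line]
  simp

lemma isProb (hb : 0 < b) (ha1 : -b ≤ a) (ha2 : a ≤ b) : IsProbabilityMeasure (PP b a) := by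
  constructor
  calc PP b a univ = (PP b a).map Prod.fst univ := by
        rw [Measure.map_apply measurable_fst MeasurableSet.univ, Set.preimage_univ]
    _ = 1 := by rw [map_fst_PP hb ha1 ha2]; exact measure_univ

def Str (M : ℝ) : Set (ℝ × ℝ) := {p | |p.2 - p.1| ≤ M}

lemma hStr (M : ℝ) : MeasurableSet (Str M) :=
  measurableSet_le (measurable_snd.sub measurable_fst).abs measurable_const

lemma Pb_strip (hb : 0 < b) : Pb b a (Str (2+2*b))ᶜ = 0 := by
  rw [Pb, Measure.sum_apply _ (hStr _).compl]
  refine ENNReal.tsum_eq_zero.mpr fun n => ?_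
  rw [Measure.smul_apply, smul_eq_mul]
  have hsub : (Str (2+2*b))ᶜ ⊆
      ((Ico (n:ℝ) (n+1))ᶜ ×ˢ univ) ∪ (univ ×ˢ (Ico (n:ℝ) (n+1))ᶜ) := by
    intro p hp
    simp only [Set.mem_union, Set.mem_prod, Set.mem_compl_iff, Set.mem_univ, and_true, true_and]
    by_contra hcon
    push_neg at hcon
    obtain ⟨hx, hy⟩ := hcon
    simp only [Set.mem_Ico] at hx hy
    apply hp
    simp only [Str, Set.mem_setOf_eq, abs_le]
    obtain ⟨hx1, hx2⟩ := hx
    obtain ⟨hy1, hy2⟩ := hy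
    constructor <;> linarith
  have hz : ((mun b a n).prod (mun b a n))
      (((Ico (n:ℝ) (n+1))ᶜ ×ˢ univ) ∪ (univ ×ˢ (Ico (n:ℝ) (n+1))ᶜ)) = 0 := by
    have hQc : (mun b a n) (Ico (n:ℝ) (n+1))ᶜ = 0 := by
      rw [mun, Measure.restrict_apply measurableSet_Ico.compl]
      simp
    refine measure_union_null ?_ ?_
    · rw [Measure.prod_prod, hQc, zero_mul]
    · rw [Measure.prod_prod, hQc, mul_zero]
  rw [measure_mono_null hsub hz, mul_zero]

lemma P1_strip (hb : 0 < b) (ha1 : -b ≤ a) (ha2 : a ≤ b) : P1 b a (Str (2+2*b))ᶜ = 0 := by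
  rw [P1_apply (hStr _).compl]
  have hpre : (fun x : ℝ => (x, x + a)) ⁻¹' (Str (2+2*b))ᶜ = ∅ := by
    rw [Set.eq_empty_iff_forall_notMem]
    intro x hx
    simp only [Set.mem_preimage, Set.mem_compl_iff, Str, Set.mem_setOf_eq,
      add_sub_cancel_left] at hx
    apply hx
    rw [abs_le]
    constructor <;> linarith
  rw [hpre, Set.empty_inter, measure_empty, mul_zero]

lemma P2_strip (hb : 0 < b) (ha1 : -b ≤ a) (ha2 : a ≤ b) : P2 b a (Str (2+2*b))ᶜ = 0 := by
  rw [P2_apply (hStr _).compl]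
  have hpre : (fun x : ℝ => (x, 1 + a - x)) ⁻¹' (Str (2+2*b))ᶜ ∩ Icc a (a+1) = ∅ := by
    rw [Set.eq_empty_iff_forall_notMem]
    intro x hx
    obtain ⟨hp, hic⟩ := hx
    simp only [Set.mem_preimage, Set.mem_compl_iff, Str, Set.mem_setOf_eq] at hp
    simp only [Set.mem_Icc] at hic
    apply hp
    rw [abs_le]
    constructor <;> linarith [hic.1, hic.2]
  rw [hpre, measure_empty, mul_zero]

lemma PP_strip (hb : 0 < b) (ha1 : -b ≤ a) (ha2 : a ≤ b) : PP b a (Str (2+2*b)) = 1 := by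
  haveI := isProb hb ha1 ha2
  rw [← prob_compl_eq_zero_iff (hStr _)]
  rw [PP, Measure.add_apply, Measure.add_apply, Pb_strip hb, P1_strip hb ha1 ha2,
    P2_strip hb ha1 ha2]
  simp

lemma PP_ae (hb : 0 < b) (ha1 : -b ≤ a) (ha2 : a ≤ b) :
    ∀ᵐ p ∂(PP b a), p.2 = p.1 + a →
      (|p.1| ≤ (2+2*b)/2 + b ∧ |p.2| ≤ (2+2*b)/2 + b) := by
  rw [ae_iff]
  set B : Set (ℝ × ℝ) := {p | |p.1| ≤ (2+2*b)/2 + b ∧ |p.2| ≤ (2+2*b)/2 + b} with hB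
  have hBmeas : MeasurableSet B :=
    (measurableSet_le measurable_fst.abs measurable_const).inter
      (measurableSet_le measurable_snd.abs measurable_const)
  have hsub : {p : ℝ × ℝ | ¬(p.2 = p.1 + a →
      (|p.1| ≤ (2+2*b)/2 + b ∧ |p.2| ≤ (2+2*b)/2 + b))} = Ev a ∩ Bᶜ := by
    ext p
    simp only [Set.mem_setOf_eq, Set.mem_inter_iff, Set.mem_compl_iff, Ev, hB,
      Classical.not_imp]
  rw [hsub]
  have hmeas : MeasurableSet (Ev a ∩ Bᶜ) := hEv.inter hBmeas.compl
  rw [PP, Measure.add_apply, Measure.add_apply]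
  have h1 : Pb b a (Ev a ∩ Bᶜ) = 0 :=
    measure_mono_null Set.inter_subset_left Pb_line
  have h2 : P2 b a (Ev a ∩ Bᶜ) = 0 :=
    measure_mono_null Set.inter_subset_left P2_line
  have h3 : P1 b a (Ev a ∩ Bᶜ) = 0 := by
    rw [P1_apply hmeas]
    have hpre : (fun x : ℝ => (x, x + a)) ⁻¹' (Ev a ∩ Bᶜ) ∩ Icc (0:ℝ) 1 = ∅ := by
      rw [Set.eq_empty_iff_forall_notMem]
      intro x hx
      obtain ⟨⟨hev, hnb⟩, hic⟩ := hx
      simp only [Set.mem_Icc] at hic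
      simp only [Set.mem_compl_iff, hB, Set.mem_setOf_eq] at hnb
      apply hnb
      rw [abs_le, abs_le]
      exact ⟨⟨by linarith [hic.1], by linarith [hic.2]⟩,
        ⟨by linarith [hic.1], by linarith [hic.2]⟩⟩
    rw [hpre, measure_empty, mul_zero]
  rw [h1, h2, h3]
  simp

lemma sqrt_two_pi_ge_one : (1:ℝ) ≤ Real.sqrt (2 * Real.pi) := by
  rw [show (1:ℝ) = Real.sqrt 1 from (Real.sqrt_one).symm]
  exact Real.sqrt_le_sqrt (by nlinarith [Real.pi_gt_three])

lemma dlt_lt_one : dlt b < 1 := by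
  have h1 : gaussianPDFReal 0 1 (1+b) ≤ gaussianPDFReal 0 1 0 := pdf_mono (by simp)
  have h2 : gaussianPDFReal 0 1 0 = (Real.sqrt (2 * Real.pi))⁻¹ := by
    rw [gaussianPDFReal_eq]; norm_num
  have h3 : (Real.sqrt (2 * Real.pi))⁻¹ ≤ 1 := by
    rw [inv_le_one_iff₀]
    right
    exact sqrt_two_pi_ge_one
  unfold dlt
  rw [h2] at h1
  linarith

end S0
end AuxDefs
end Statement0Aux

/-- For every `b > 0` there exist `M_b > 0` and `ρ¹_b, ρ²_b ∈ (0,1)`, depending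
only on `b`, such that for every `a ∈ [−b, b]` there is a probability space carrying real random
variables `U₁, U₂`, each with standard Gaussian law `N(0,1)`, with
`ρ¹_b ≤ P(U₂ = U₁ + a) ≤ ρ²_b`, `P(|U₂ − U₁| ≤ M_b) = 1`, and a.s. on `{U₂ = U₁ + a}` one has
`|U₁| ≤ M_b/2 + b` and `|U₂| ≤ M_b/2 + b`. -/
theorem statement0 (b : ℝ) (hb : 0 < b) :
    ∃ M ρ₁ ρ₂ : ℝ, 0 < M ∧ ρ₁ ∈ Set.Ioo (0 : ℝ) 1 ∧ ρ₂ ∈ Set.Ioo (0 : ℝ) 1 ∧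
      ∀ a ∈ Set.Icc (-b) b,
        ∃ (Ω : Type) (_ : MeasurableSpace Ω) (P : Measure Ω) (_ : IsProbabilityMeasure P)
          (U₁ U₂ : Ω → ℝ),
          Measurable U₁ ∧ Measurable U₂ ∧
          P.map U₁ = gaussianReal 0 1 ∧
          P.map U₂ = gaussianReal 0 1 ∧
          ρ₁ ≤ (P {ω | U₂ ω = U₁ ω + a}).toReal ∧
          (P {ω | U₂ ω = U₁ ω + a}).toReal ≤ ρ₂ ∧
          P {ω | |U₂ ω - U₁ ω| ≤ M} = 1 ∧
          (∀ᵐ ω ∂P, U₂ ω = U₁ ω + a → (|U₁ ω| ≤ M / 2 + b ∧ |U₂ ω| ≤ M / 2 + b)) := by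
  refine ⟨2 + 2 * b, S0.dlt b, S0.dlt b, by linarith, ⟨S0.dlt_pos, S0.dlt_lt_one⟩,
    ⟨S0.dlt_pos, S0.dlt_lt_one⟩, ?_⟩
  intro a ha
  obtain ⟨ha1, ha2⟩ := ha
  haveI hPr : IsProbabilityMeasure (S0.PP b a) := S0.isProb hb ha1 ha2
  have hEvEq : {ω : ℝ × ℝ | Prod.snd ω = Prod.fst ω + a} = S0.Ev a := rfl
  have hEvMeasure : (S0.PP b a) {ω : ℝ × ℝ | Prod.snd ω = Prod.fst ω + a} = S0.dn b := by
    rw [hEvEq]; exact S0.PP_line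
  have htoReal : ((S0.PP b a) {ω : ℝ × ℝ | Prod.snd ω = Prod.fst ω + a}).toReal = S0.dlt b := by
    rw [hEvMeasure, S0.dn, ENNReal.toReal_ofReal S0.dlt_pos.le]
  refine ⟨ℝ × ℝ, inferInstance, S0.PP b a, hPr, Prod.fst, Prod.snd,
    measurable_fst, measurable_snd, S0.map_fst_PP hb ha1 ha2, S0.map_snd_PP hb ha1 ha2,
    le_of_eq htoReal.symm, le_of_eq htoReal, ?_, ?_⟩
  · have : {ω : ℝ × ℝ | |Prod.snd ω - Prod.fst ω| ≤ 2 + 2 * b} = S0.Str (2 + 2 * b) := rfl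
    rw [this]
    exact S0.PP_strip hb ha1 ha2
  · exact S0.PP_ae hb ha1 ha2
end

section
/- Let H ∈ (1/2, 1), let a < b < s < t be real numbers, and let w : ℝ → ℝ be a continuous function. Define I(a,b,s,t,w) = ((t−a)^{H−1/2} − (s−a)^{H−1/2})·(w(a) − w(b)) + (H − 1/2)·∫_a^b ((t−r)^{H−3/2} − (s−r)^{H−3/2})·(w(r) − w(b)) dr. Then (1/(t−s))·|I(a,b,s,t,w)| ≤ (t−a)^{H−3/2}·|w(b) − w(a)| + (1/2)·∫_a^b (s−r)^{H−5/2}·|w(r) − w(b)| dr. -/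
lemma lemA (α x y : ℝ) (hy : 0 < y) (hxy : y ≤ x) (hα1 : α ≤ 1) :
    x ^ α - y ^ α ≤ (x - y) * x ^ (α - 1) := by
  have hx : 0 < x := lt_of_lt_of_le hy hxy
  have h1 : x ^ (α - 1) ≤ y ^ (α - 1) :=
    Real.rpow_le_rpow_of_nonpos hy hxy (by linarith)
  have h2 : y * x ^ (α - 1) ≤ y ^ α := by
    calc y * x ^ (α - 1) ≤ y * y ^ (α - 1) := by
          exact mul_le_mul_of_nonneg_left h1 hy.le
      _ = y ^ (α - 1) * y := by ring
      _ = y ^ ((α - 1) + 1) := (Real.rpow_add_one hy.ne' (α - 1)).symm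
      _ = y ^ α := by congr 1; ring
  have h3 : x ^ α = x * x ^ (α - 1) := by
    calc x ^ α = x ^ ((α - 1) + 1) := by congr 1; ring
      _ = x ^ (α - 1) * x := Real.rpow_add_one hx.ne' (α - 1)
      _ = x * x ^ (α - 1) := by ring
  nlinarith [h2, h3]

lemma lemA' (γ x y : ℝ) (hγ0 : 0 ≤ γ) (hγ1 : γ ≤ 1) (hx : 0 < x) (hxy : x ≤ y) :
    y ^ γ - x ^ γ ≤ γ * (y - x) * x ^ (γ - 1) := by
  have hy : 0 < y := lt_of_lt_of_le hx hxy
  have hb := rpow_one_add_le_one_add_mul_self (s := (y - x)/x)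
    (by have : 0 ≤ (y - x)/x := div_nonneg (by linarith) hx.le; linarith) hγ0 hγ1
  have h1 : (1 + (y - x)/x) = y / x := by field_simp; ring
  rw [h1, Real.div_rpow hy.le hx.le] at hb
  have hxγ : (0:ℝ) < x ^ γ := Real.rpow_pos_of_pos hx γ
  have h2 : y ^ γ ≤ x ^ γ + γ * (y - x) * x ^ (γ - 1) := by
    have := mul_le_mul_of_nonneg_left hb hxγ.le
    rw [mul_div_cancel₀] at this
    · calc y ^ γ ≤ x ^ γ * (1 + γ * ((y - x)/x)) := this
        _ = x ^ γ + γ * (y - x) * (x ^ γ / x) := by ring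
        _ = x ^ γ + γ * (y - x) * x ^ (γ - 1) := by
            rw [show x ^ γ / x = x ^ (γ - 1) from by
              rw [Real.rpow_sub hx, Real.rpow_one]]
    · exact hxγ.ne'
  linarith

lemma lemB (γ x y : ℝ) (hγ0 : 0 ≤ γ) (hγ1 : γ ≤ 1) (hx : 0 < x) (hxy : x ≤ y) :
    x ^ (-γ) - y ^ (-γ) ≤ γ * (y - x) * x ^ (-γ - 1) := by
  have hy : 0 < y := lt_of_lt_of_le hx hxy
  have hX : (0:ℝ) < x ^ γ := Real.rpow_pos_of_pos hx γ
  have hY : (0:ℝ) < y ^ γ := Real.rpow_pos_of_pos hy γ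
  have hXY : x ^ γ ≤ y ^ γ := Real.rpow_le_rpow hx.le hxy hγ0
  have h1 : y ^ γ - x ^ γ ≤ γ * (y - x) * x ^ (γ - 1) := lemA' γ x y hγ0 hγ1 hx hxy
  have e1 : x ^ (-γ) = (x ^ γ)⁻¹ := Real.rpow_neg hx.le γ
  have e2 : y ^ (-γ) = (y ^ γ)⁻¹ := Real.rpow_neg hy.le γ
  have e3 : x ^ (γ - 1) * ((x ^ γ)⁻¹ * (x ^ γ)⁻¹) = x ^ (-γ - 1) := by
    rw [← Real.rpow_neg hx.le, ← Real.rpow_add hx, ← Real.rpow_add hx]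
    congr 1; ring
  rw [e1, e2]
  have key : (x ^ γ)⁻¹ - (y ^ γ)⁻¹ = (y ^ γ - x ^ γ) * ((x ^ γ)⁻¹ * (y ^ γ)⁻¹) := by
    field_simp
  rw [key, ← e3]
  have hg : (0:ℝ) ≤ γ * (y - x) := by nlinarith
  have hmono : (x ^ γ)⁻¹ * (y ^ γ)⁻¹ ≤ (x ^ γ)⁻¹ * (x ^ γ)⁻¹ := by gcongr
  calc (y ^ γ - x ^ γ) * ((x ^ γ)⁻¹ * (y ^ γ)⁻¹)
      ≤ (γ * (y - x) * x ^ (γ - 1)) * ((x ^ γ)⁻¹ * (x ^ γ)⁻¹) := by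
        apply mul_le_mul h1 hmono (by positivity) (by positivity)
    _ = γ * (y - x) * (x ^ (γ - 1) * ((x ^ γ)⁻¹ * (x ^ γ)⁻¹)) := by ring

open MeasureTheory intervalIntegral

/-- For `H ∈ (1/2,1)`, `a < b < s < t` and a continuous `w : ℝ → ℝ`, the
integration-by-parts expression
`I = ((t−a)^{H−1/2} − (s−a)^{H−1/2})(w a − w b)
      + (H−1/2)∫_a^b ((t−r)^{H−3/2} − (s−r)^{H−3/2})(w r − w b) dr`
satisfies
`(1/(t−s))|I| ≤ (t−a)^{H−3/2}|w b − w a| + (1/2)∫_a^b (s−r)^{H−5/2}|w r − w b| dr`. -/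
theorem statement4 (H a b s t : ℝ) (hH : H ∈ Set.Ioo (1/2 : ℝ) 1)
    (hab : a < b) (hbs : b < s) (hst : s < t)
    (w : ℝ → ℝ) (hw : Continuous w) :
    (1 / (t - s)) *
      |((t - a) ^ (H - 1/2) - (s - a) ^ (H - 1/2)) * (w a - w b)
        + (H - 1/2) * ∫ r in a..b, ((t - r) ^ (H - 3/2) - (s - r) ^ (H - 3/2)) * (w r - w b)|
    ≤ (t - a) ^ (H - 3/2) * |w b - w a|
        + (1/2) * ∫ r in a..b, (s - r) ^ (H - 5/2) * |w r - w b| := by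
  obtain ⟨hH1, hH2⟩ := hH
  have hts : (0:ℝ) < t - s := by linarith
  set f : ℝ → ℝ := fun r => ((t - r) ^ (H - 3/2) - (s - r) ^ (H - 3/2)) * (w r - w b) with hf
  set g : ℝ → ℝ := fun r => (s - r) ^ (H - 5/2) * |w r - w b| with hg
  -- continuity / integrability
  have hconts : ∀ c : ℝ, b < c → ∀ e : ℝ, ContinuousOn (fun r => (c - r) ^ e) (Set.Icc a b) := by
    intro c hc e
    apply ContinuousOn.rpow_const (by fun_prop)
    intro r hr
    exact Or.inl (ne_of_gt (by nlinarith [hr.2]))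
  have huIcc : Set.uIcc a b = Set.Icc a b := Set.uIcc_of_le hab.le
  have hint1 : IntervalIntegrable f volume a b := by
    apply ContinuousOn.intervalIntegrable
    rw [huIcc]
    exact (((hconts t (by linarith) _).sub (hconts s hbs _)).mul
      ((hw.sub continuous_const).continuousOn))
  have hint2 : IntervalIntegrable g volume a b := by
    apply ContinuousOn.intervalIntegrable
    rw [huIcc]
    exact ((hconts s hbs _).mul ((hw.sub continuous_const).abs.continuousOn))
  -- pointwise bound for the integrand
  have hpt : ∀ r ∈ Set.Icc a b, |f r| ≤ ((3/2 - H) * (t - s)) * g r := by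
    intro r hr
    have hx : (0:ℝ) < s - r := by nlinarith [hr.2]
    have hxy : s - r ≤ t - r := by linarith
    have hB := lemB (3/2 - H) (s - r) (t - r) (by linarith) (by linarith) hx hxy
    rw [show -(3/2 - H) - 1 = H - 5/2 by ring, show -(3/2 - H) = H - 3/2 by ring] at hB
    have eB : (3/2 - H) * (t - r - (s - r)) * (s - r) ^ (H - 5/2)
        = (3/2 - H) * (t - s) * (s - r) ^ (H - 5/2) := by ring
    have hB' : (s - r) ^ (H - 3/2) - (t - r) ^ (H - 3/2)
        ≤ (3/2 - H) * (t - s) * (s - r) ^ (H - 5/2) := by linarith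
    have hsign : (t - r) ^ (H - 3/2) - (s - r) ^ (H - 3/2) ≤ 0 := by
      have := Real.rpow_le_rpow_of_nonpos hx hxy (by linarith : H - 3/2 ≤ 0)
      linarith
    calc |f r| = |(t - r) ^ (H - 3/2) - (s - r) ^ (H - 3/2)| * |w r - w b| := abs_mul _ _
      _ ≤ ((3/2 - H) * (t - s) * (s - r) ^ (H - 5/2)) * |w r - w b| := by
          apply mul_le_mul_of_nonneg_right _ (abs_nonneg _)
          rw [abs_of_nonpos hsign]; linarith
      _ = ((3/2 - H) * (t - s)) * g r := by rw [hg]; ring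
  -- bound the integral term
  have hJabs : |∫ r in a..b, f r| ≤ ∫ r in a..b, |f r| :=
    intervalIntegral.abs_integral_le_integral_abs hab.le
  have hmono : (∫ r in a..b, |f r|) ≤ ∫ r in a..b, ((3/2 - H) * (t - s)) * g r :=
    intervalIntegral.integral_mono_on hab.le hint1.abs (hint2.const_mul _) hpt
  have hconstmul : (∫ r in a..b, ((3/2 - H) * (t - s)) * g r)
      = ((3/2 - H) * (t - s)) * ∫ r in a..b, g r :=
    intervalIntegral.integral_const_mul _ _
  have hBnn : 0 ≤ ∫ r in a..b, g r :=
    intervalIntegral.integral_nonneg hab.le (fun r hr =>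
      mul_nonneg (Real.rpow_nonneg (by nlinarith [hr.2] : (0:ℝ) ≤ s - r) _) (abs_nonneg _))
  -- first term bound
  have hfirst0 : 0 ≤ (t - a) ^ (H - 1/2) - (s - a) ^ (H - 1/2) := by
    have := Real.rpow_le_rpow (by linarith : (0:ℝ) ≤ s - a)
      (by linarith : s - a ≤ t - a) (by linarith : (0:ℝ) ≤ H - 1/2)
    linarith
  have hkey1 : (t - a) ^ (H - 1/2) - (s - a) ^ (H - 1/2) ≤ (t - s) * (t - a) ^ (H - 3/2) := by
    have h := lemA (H - 1/2) (t - a) (s - a) (by linarith) (by linarith) (by linarith)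
    rw [show H - 1/2 - 1 = H - 3/2 by ring] at h
    have e : (t - a - (s - a)) * (t - a) ^ (H - 3/2) = (t - s) * (t - a) ^ (H - 3/2) := by ring
    linarith
  -- assemble
  set J := ∫ r in a..b, f r with hJ
  set B := ∫ r in a..b, g r with hB
  have htri : |((t - a) ^ (H - 1/2) - (s - a) ^ (H - 1/2)) * (w a - w b) + (H - 1/2) * J|
      ≤ ((t - a) ^ (H - 1/2) - (s - a) ^ (H - 1/2)) * |w b - w a| + (H - 1/2) * |J| := by
    calc |((t - a) ^ (H - 1/2) - (s - a) ^ (H - 1/2)) * (w a - w b) + (H - 1/2) * J|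
        ≤ |((t - a) ^ (H - 1/2) - (s - a) ^ (H - 1/2)) * (w a - w b)| + |(H - 1/2) * J| :=
          abs_add_le _ _
      _ = ((t - a) ^ (H - 1/2) - (s - a) ^ (H - 1/2)) * |w b - w a| + (H - 1/2) * |J| := by
          rw [abs_mul, abs_mul, abs_of_nonneg hfirst0,
            abs_of_nonneg (by linarith : (0:ℝ) ≤ H - 1/2), abs_sub_comm (w a) (w b)]
  have hJle : (H - 1/2) * |J| ≤ (1/2) * (t - s) * B := by
    have h1 : |J| ≤ ((3/2 - H) * (t - s)) * B := by
      calc |J| ≤ ∫ r in a..b, |f r| := hJabs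
        _ ≤ ∫ r in a..b, ((3/2 - H) * (t - s)) * g r := hmono
        _ = ((3/2 - H) * (t - s)) * B := hconstmul
    have hc : (H - 1/2) * (3/2 - H) ≤ 1/2 := by nlinarith
    have hJnn : (0:ℝ) ≤ |J| := abs_nonneg _
    nlinarith [mul_le_mul_of_nonneg_left h1 (by linarith : (0:ℝ) ≤ H - 1/2),
      mul_nonneg hts.le hBnn]
  have hwnn : (0:ℝ) ≤ |w b - w a| := abs_nonneg _
  have hfinal : |((t - a) ^ (H - 1/2) - (s - a) ^ (H - 1/2)) * (w a - w b) + (H - 1/2) * J|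
      ≤ ((t - a) ^ (H - 3/2) * |w b - w a| + (1/2) * B) * (t - s) := by
    have h2 : ((t - a) ^ (H - 1/2) - (s - a) ^ (H - 1/2)) * |w b - w a|
        ≤ (t - s) * (t - a) ^ (H - 3/2) * |w b - w a| :=
      mul_le_mul_of_nonneg_right (by linarith) hwnn
    calc _ ≤ ((t - a) ^ (H - 1/2) - (s - a) ^ (H - 1/2)) * |w b - w a| + (H - 1/2) * |J| := htri
      _ ≤ (t - s) * (t - a) ^ (H - 3/2) * |w b - w a| + (1/2) * (t - s) * B := by linarith
      _ = ((t - a) ^ (H - 3/2) * |w b - w a| + (1/2) * B) * (t - s) := by ring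
  rw [one_div, inv_mul_eq_div, div_le_iff₀ hts]
  exact hfinal
end

section
/- Let d ≥ 1, κ > 0, T > 0, and let ρ : [0,T] → ℝ^d be differentiable with ρ(t) ≠ 0 for all t ∈ [0,T], and suppose that for all t ∈ [0,T], d/dt |ρ(t)|² ≤ −2κ·|ρ(t)|^{3/2}, where |·| denotes the Euclidean norm. Then for every t ∈ [0,T] one has |ρ(t)|^{1/2} ≤ |ρ(0)|^{1/2} − (κ/2)·t; in particular t ↦ |ρ(t)| is non-increasing on [0,T] and T ≤ 2·|ρ(0)|^{1/2}/κ. -/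
/-- Let `d ≥ 1`, `κ > 0`, `T > 0`, and let `ρ : [0,T] → ℝ^d` be differentiable
with `ρ t ≠ 0` on `[0,T]`, satisfying `d/dt ‖ρ t‖² ≤ −2κ‖ρ t‖^{3/2}` on `[0,T]`. Then
`‖ρ t‖^{1/2} ≤ ‖ρ 0‖^{1/2} − (κ/2)t` for `t ∈ [0,T]`; in particular `t ↦ ‖ρ t‖` is
non-increasing on `[0,T]` and `T ≤ 2‖ρ 0‖^{1/2}/κ`. -/
theorem statement7 (d : ℕ) (hd : 1 ≤ d) (κ T : ℝ) (hκ : 0 < κ) (hT : 0 < T)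
    (ρ : ℝ → EuclideanSpace ℝ (Fin d))
    (hdiff : DifferentiableOn ℝ ρ (Set.Icc 0 T))
    (hne : ∀ t ∈ Set.Icc (0 : ℝ) T, ρ t ≠ 0)
    (hder : ∀ t ∈ Set.Icc (0 : ℝ) T,
      derivWithin (fun u => ‖ρ u‖ ^ 2) (Set.Icc 0 T) t ≤ -2 * κ * ‖ρ t‖ ^ ((3 : ℝ) / 2)) :
    (∀ t ∈ Set.Icc (0 : ℝ) T, Real.sqrt ‖ρ t‖ ≤ Real.sqrt ‖ρ 0‖ - κ / 2 * t) ∧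
    AntitoneOn (fun t => ‖ρ t‖) (Set.Icc 0 T) ∧
    T ≤ 2 * Real.sqrt ‖ρ 0‖ / κ := by
  set n : ℝ → ℝ := fun u => ‖ρ u‖ with hn_def
  have hpos : ∀ t ∈ Set.Icc (0 : ℝ) T, 0 < n t := fun t ht => norm_pos_iff.mpr (hne t ht)
  have hn_diff : DifferentiableOn ℝ n (Set.Icc 0 T) :=
    fun t ht => ((hdiff t ht).norm ℝ (hne t ht))
  set h : ℝ → ℝ := fun u => Real.sqrt (n u) + κ / 2 * u with hh_def
  have hcont : ContinuousOn h (Set.Icc 0 T) := by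
    apply ContinuousOn.add
    · exact (hn_diff.continuousOn.sqrt)
    · exact (continuous_const.mul continuous_id).continuousOn
  have hderiv : ∀ t ∈ interior (Set.Icc (0:ℝ) T), HasDerivAt h (deriv h t) t ∧ deriv h t ≤ 0 := by
    intro t ht
    rw [interior_Icc] at ht
    have htIcc : t ∈ Set.Icc (0:ℝ) T := ⟨ht.1.le, ht.2.le⟩
    have hnt : 0 < n t := hpos t htIcc
    have hmem : Set.Icc (0:ℝ) T ∈ nhds t := Icc_mem_nhds ht.1 ht.2
    have hnat : DifferentiableAt ℝ n t := (hn_diff t htIcc).differentiableAt hmem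
    set n' : ℝ := deriv n t with hn'_def
    have hnd : HasDerivAt n n' t := hnat.hasDerivAt
    have hf : HasDerivAt (fun u => n u ^ 2) ((2 : ℕ) * n t ^ (2 - 1) * n') t := hnd.pow 2
    have hfd : derivWithin (fun u => ‖ρ u‖ ^ 2) (Set.Icc 0 T) t = 2 * n t * n' := by
      rw [derivWithin_of_mem_nhds hmem]
      have := hf.deriv
      simpa using this
    have hkey : 2 * n t * n' ≤ -2 * κ * n t ^ ((3:ℝ)/2) := hfd ▸ hder t htIcc
    have hrpow : n t ^ ((3:ℝ)/2) = n t * Real.sqrt (n t) := by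
      rw [show (3:ℝ)/2 = 1 + 1/2 by norm_num, Real.rpow_add hnt, Real.rpow_one,
        ← Real.sqrt_eq_rpow]
    have hs : 0 < Real.sqrt (n t) := Real.sqrt_pos.mpr hnt
    have hn'le : n' ≤ -κ * Real.sqrt (n t) := by
      rw [hrpow] at hkey
      nlinarith
    have hsq : HasDerivAt (fun u => Real.sqrt (n u)) (1 / (2 * Real.sqrt (n t)) * n') t :=
      (Real.hasDerivAt_sqrt (ne_of_gt hnt)).comp t hnd
    have hh : HasDerivAt h (1 / (2 * Real.sqrt (n t)) * n' + κ / 2) t := by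
      have := hsq.add ((hasDerivAt_id t).const_mul (κ / 2))
      rw [mul_one] at this
      exact this
    have hbound : 1 / (2 * Real.sqrt (n t)) * n' + κ / 2 ≤ 0 := by
      have h1 : 1 / (2 * Real.sqrt (n t)) * n' ≤ 1 / (2 * Real.sqrt (n t)) * (-κ * Real.sqrt (n t)) := by
        apply mul_le_mul_of_nonneg_left hn'le
        positivity
      have h2 : 1 / (2 * Real.sqrt (n t)) * (-κ * Real.sqrt (n t)) = -κ / 2 := by
        field_simp
      linarith
    rw [hh.deriv]
    exact ⟨hh, hbound⟩
  have hanti : AntitoneOn h (Set.Icc 0 T) := by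
    apply antitoneOn_of_deriv_nonpos (convex_Icc 0 T) hcont
    · intro x hx
      exact (hderiv x hx).1.differentiableAt.differentiableWithinAt
    · intro x hx
      exact (hderiv x hx).2
  have h0 : (0:ℝ) ∈ Set.Icc (0:ℝ) T := ⟨le_refl 0, hT.le⟩
  have hmain : ∀ t ∈ Set.Icc (0 : ℝ) T, Real.sqrt ‖ρ t‖ ≤ Real.sqrt ‖ρ 0‖ - κ / 2 * t := by
    intro t ht
    have := hanti h0 ht ht.1
    simp only [hh_def] at this
    linarith [this]
  refine ⟨hmain, ?_, ?_⟩
  · intro a ha b hb hab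
    have h1 := hanti ha hb hab
    simp only [hh_def] at h1
    have h2 : Real.sqrt (n b) ≤ Real.sqrt (n a) := by nlinarith [hκ]
    have ha2 : Real.sqrt (n a) ^ 2 = n a := Real.sq_sqrt (norm_nonneg _)
    have hb2 : Real.sqrt (n b) ^ 2 = n b := Real.sq_sqrt (norm_nonneg _)
    have hbn : 0 ≤ Real.sqrt (n b) := Real.sqrt_nonneg _
    simp only [hn_def] at ha2 hb2 ⊢
    nlinarith
  · have := hmain T ⟨hT.le, le_refl T⟩
    have hst : 0 ≤ Real.sqrt ‖ρ T‖ := Real.sqrt_nonneg _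
    rw [le_div_iff₀ hκ]
    nlinarith
end

section
/- Let (X, 𝒜) be a measurable space, μ a probability measure on X, and φ : X → X a measurable bijection with measurable inverse ψ such that the pushforward φ_*μ is absolutely continuous with respect to μ, with density D = d(φ_*μ)/dμ. Let ν be the measure on X with density (1/2)·min(D, 1) with respect to μ, let P₁ be the pushforward of ν under the map w ↦ (ψ(w), w) from X to X × X, let S : X × X → X × X be the swap map S(w₁,w₂) = (w₂,w₁), let P̃₁ = P₁ + S_*P₁, and let Π₁ : X × X → X be the projection onto the first coordinate. Then the pushforward (Π₁)_*P̃₁ satisfies (Π₁)_*P̃₁(A) ≤ μ(A) for every measurable set A ⊆ X. -/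
open MeasureTheory

/-- Let `μ` be a probability measure on `X` and `φ : X → X` a measurable bijection
with measurable inverse `ψ` such that `φ_*μ ≪ μ` with density `D`. With
`ν = (1/2)·min(D,1)·μ`, `P₁ = (w ↦ (ψ w, w))_*ν`, `P̃₁ = P₁ + S_*P₁` (`S` the swap map), the
first marginal of `P̃₁` satisfies `(Π₁)_*P̃₁(A) ≤ μ(A)` for every measurable `A`. -/
theorem statement8 {X : Type*} [MeasurableSpace X] (μ : Measure X) [IsProbabilityMeasure μ]
    (φ ψ : X → X) (hφ : Measurable φ) (hψ : Measurable ψ)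
    (hlr : Function.LeftInverse ψ φ) (hrl : Function.RightInverse ψ φ)
    (hac : μ.map φ ≪ μ)
    (D : X → ENNReal) (hD : D = (μ.map φ).rnDeriv μ)
    (ν : Measure X) (hν : ν = μ.withDensity fun w => (1 / 2 : ENNReal) * min (D w) 1)
    (P₁ : Measure (X × X)) (hP₁ : P₁ = ν.map fun w => (ψ w, w))
    (Pt : Measure (X × X)) (hPt : Pt = P₁ + P₁.map Prod.swap) :
    ∀ A : Set X, MeasurableSet A → (Pt.map Prod.fst) A ≤ μ A := by
  intro A hA
  have hDm : Measurable D := hD ▸ Measure.measurable_rnDeriv _ _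
  have hA' : MeasurableSet (ψ ⁻¹' A) := hψ hA
  have hm : Measurable fun w => (ψ w, w) := hψ.prodMk measurable_id
  have hmap : Pt.map Prod.fst A = ν (ψ ⁻¹' A) + ν A := by
    subst hPt hP₁
    rw [Measure.map_add _ _ measurable_fst, Measure.add_apply,
      Measure.map_apply measurable_fst hA,
      Measure.map_apply hm (measurable_fst hA),
      Measure.map_apply measurable_fst hA,
      Measure.map_apply measurable_swap (measurable_fst hA),
      Measure.map_apply hm
        (measurable_swap (measurable_fst hA))]
    rfl
  have hb1 : ν A ≤ (1 / 2 : ENNReal) * μ A := by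
    rw [hν, withDensity_apply _ hA]
    calc ∫⁻ w in A, (1 / 2 : ENNReal) * min (D w) 1 ∂μ
        ≤ ∫⁻ _ in A, (1 / 2 : ENNReal) ∂μ := by
          refine lintegral_mono fun w => ?_
          calc (1 / 2 : ENNReal) * min (D w) 1 ≤ (1 / 2 : ENNReal) * 1 := by
                gcongr; exact min_le_right _ _
            _ = 1 / 2 := mul_one _
      _ = (1 / 2 : ENNReal) * μ A := by rw [setLIntegral_const]
  have hb2 : ν (ψ ⁻¹' A) ≤ (1 / 2 : ENNReal) * μ A := by
    rw [hν, withDensity_apply _ hA']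
    have step1 : ∫⁻ w in ψ ⁻¹' A, (1 / 2 : ENNReal) * min (D w) 1 ∂μ
        ≤ (1 / 2 : ENNReal) * ∫⁻ w in ψ ⁻¹' A, D w ∂μ := by
      rw [← lintegral_const_mul _ hDm]
      refine lintegral_mono fun w => ?_
      gcongr
      exact min_le_left _ _
    refine step1.trans ?_
    have hle : ∫⁻ w in ψ ⁻¹' A, D w ∂μ ≤ (μ.map φ) (ψ ⁻¹' A) := by
      rw [← withDensity_apply _ hA', hD]
      exact Measure.withDensity_rnDeriv_le _ _ _
    have heq : (μ.map φ) (ψ ⁻¹' A) = μ A := by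
      rw [Measure.map_apply hφ hA']
      congr 1
      ext x
      simp [hlr x]
    rw [← heq]
    gcongr
  rw [hmap]
  calc ν (ψ ⁻¹' A) + ν A ≤ (1 / 2 : ENNReal) * μ A + (1 / 2 : ENNReal) * μ A :=
        add_le_add hb2 hb1
    _ = μ A := by
        rw [← add_mul, ENNReal.div_add_div_same]
        norm_num
        rw [ENNReal.div_self (by norm_num) (by norm_num), one_mul]
end

section
/- Let (X, 𝒜) be a measurable space, μ a probability measure on X, and φ : X → X a measurable bijection with measurable inverse ψ such that the pushforward φ_*μ is absolutely continuous with respect to μ, with density D = d(φ_*μ)/dμ. Let ν be the measure on X with density (1/2)·min(D, 1) with respect to μ, let P₁ be the pushforward of ν under the map w ↦ (ψ(w), w) from X to X × X, let S : X × X → X × X be the swap map S(w₁,w₂) = (w₂,w₁), let P̃₁ = P₁ + S_*P₁, let Δ : X → X × X be the diagonal map Δ(w) = (w,w), let Π₁, Π₂ : X × X → X be the coordinate projections, and set P₂ = S_*P₁ + Δ_*(μ − (Π₁)_*P̃₁), where μ − (Π₁)_*P̃₁ is a nonnegative measure. Then both marginals of P₁ + P₂ are equal to μ, i.e. (Π₁)_*(P₁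 + P₂) = μ and (Π₂)_*(P₁ + P₂) = μ. -/
open MeasureTheory

/-- In the setting of Statement 8, with moreover `Δ` the diagonal map and
`P₂ = S_*P₁ + Δ_*(μ − (Π₁)_*P̃₁)`, both marginals of `P₁ + P₂` equal `μ`. -/
theorem statement9 {X : Type*} [MeasurableSpace X] (μ : Measure X) [IsProbabilityMeasure μ]
    (φ ψ : X → X) (hφ : Measurable φ) (hψ : Measurable ψ)
    (hlr : Function.LeftInverse ψ φ) (hrl : Function.RightInverse ψ φ)
    (hac : μ.map φ ≪ μ)
    (D : X → ENNReal) (hD : D = (μ.map φ).rnDeriv μ)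
    (ν : Measure X) (hν : ν = μ.withDensity fun w => (1 / 2 : ENNReal) * min (D w) 1)
    (P₁ : Measure (X × X)) (hP₁ : P₁ = ν.map fun w => (ψ w, w))
    (Pt : Measure (X × X)) (hPt : Pt = P₁ + P₁.map Prod.swap)
    (P₂ : Measure (X × X))
    (hP₂ : P₂ = P₁.map Prod.swap + (μ - Pt.map Prod.fst).map fun w => (w, w)) :
    (P₁ + P₂).map Prod.fst = μ ∧ (P₁ + P₂).map Prod.snd = μ := by
  haveI : IsProbabilityMeasure (μ.map φ) := Measure.isProbabilityMeasure_map hφ.aemeasurable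
  have hmap : Measurable fun w : X => (ψ w, w) := hψ.prodMk measurable_id
  -- marginals of P₁
  have h1 : P₁.map Prod.fst = ν.map ψ := by
    rw [hP₁, Measure.map_map measurable_fst hmap]; rfl
  have h2 : P₁.map Prod.snd = ν := by
    rw [hP₁, Measure.map_map measurable_snd hmap]
    exact Measure.map_id
  have hs1 : (P₁.map Prod.swap).map Prod.fst = ν := by
    rw [Measure.map_map measurable_fst measurable_swap]
    exact h2
  have hs2 : (P₁.map Prod.swap).map Prod.snd = ν.map ψ := by
    rw [Measure.map_map measurable_snd measurable_swap]
    exact h1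
  -- ν ≤ (1/2) • μ
  have hν1 : ν ≤ (1 / 2 : ENNReal) • μ := by
    rw [hν]
    calc μ.withDensity (fun w => (1 / 2 : ENNReal) * min (D w) 1)
        ≤ μ.withDensity (fun _ => (1 / 2 : ENNReal)) := by
          refine withDensity_mono (ae_of_all _ fun w => ?_)
          calc (1 / 2 : ENNReal) * min (D w) 1 ≤ (1 / 2) * 1 := by
                gcongr; exact min_le_right _ _
            _ = 1 / 2 := mul_one _
      _ = (1 / 2 : ENNReal) • μ := withDensity_const _
  -- ν.map ψ ≤ (1/2) • μ
  have hν2 : ν.map ψ ≤ (1 / 2 : ENNReal) • μ := by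
    have hle : ν ≤ (1 / 2 : ENNReal) • μ.map φ := by
      rw [hν]
      calc μ.withDensity (fun w => (1 / 2 : ENNReal) * min (D w) 1)
          ≤ μ.withDensity (fun w => (1 / 2 : ENNReal) * D w) := by
            refine withDensity_mono (ae_of_all _ fun w => ?_)
            exact mul_le_mul_right (min_le_left _ _) _
        _ = μ.withDensity ((1 / 2 : ENNReal) • D) := rfl
        _ = (1 / 2 : ENNReal) • μ.withDensity D := by
            rw [withDensity_smul _ (by rw [hD]; exact Measure.measurable_rnDeriv _ _)]
        _ = (1 / 2 : ENNReal) • μ.map φ := by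
            rw [hD, Measure.withDensity_rnDeriv_eq _ _ hac]
    calc ν.map ψ ≤ ((1 / 2 : ENNReal) • μ.map φ).map ψ := Measure.map_mono hle hψ
      _ = (1 / 2 : ENNReal) • (μ.map φ).map ψ := Measure.map_smul _ _ _
      _ = (1 / 2 : ENNReal) • μ := by
          rw [Measure.map_map hψ hφ]
          have : ψ ∘ φ = id := funext hlr
          rw [this]
          simp [Measure.map_id]
  have hPtfst : Pt.map Prod.fst = ν.map ψ + ν := by
    rw [hPt, Measure.map_add _ _ measurable_fst, h1, hs1]
  have hle : Pt.map Prod.fst ≤ μ := by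
    rw [hPtfst]
    calc ν.map ψ + ν ≤ (1 / 2 : ENNReal) • μ + (1 / 2 : ENNReal) • μ :=
          add_le_add hν2 hν1
      _ = ((1 / 2 : ENNReal) + (1 / 2 : ENNReal)) • μ := (add_smul _ _ _).symm
      _ = μ := by rw [ENNReal.add_halves]; simp
  haveI : IsFiniteMeasure (Pt.map Prod.fst) := isFiniteMeasure_of_le μ hle
  have hdiag : Measurable fun w : X => (w, w) := measurable_id.prodMk measurable_id
  have hdfst : ((μ - Pt.map Prod.fst).map fun w : X => (w, w)).map Prod.fst
      = μ - Pt.map Prod.fst := by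
    rw [Measure.map_map measurable_fst hdiag]
    exact Measure.map_id
  have hdsnd : ((μ - Pt.map Prod.fst).map fun w : X => (w, w)).map Prod.snd
      = μ - Pt.map Prod.fst := by
    rw [Measure.map_map measurable_snd hdiag]
    exact Measure.map_id
  constructor
  · rw [hP₂, ← add_assoc, Measure.map_add _ _ measurable_fst,
      Measure.map_add _ _ measurable_fst, h1, hs1, hdfst, ← hPtfst]
    rw [add_comm, Measure.sub_add_cancel_of_le hle]
  · rw [hP₂, ← add_assoc, Measure.map_add _ _ measurable_snd,
      Measure.map_add _ _ measurable_snd, h2, hs2, hdsnd, add_comm (ν) _, ← hPtfst,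
      add_comm, Measure.sub_add_cancel_of_le hle]
end

section
/- Let d ≥ 1 and let h : ℝ^d → ℝ^d be continuously differentiable such that the Jacobian matrix ∇h(x) = (∂_{x_j} h_i(x))_{i,j} is invertible for every x ∈ ℝ^d and such that the map x ↦ (∇h(x))^{−1} is bounded on ℝ^d (in operator norm). Then h is a global C¹-diffeomorphism from ℝ^d to ℝ^d, i.e. h is bijective and its inverse is continuously differentiable. -/
open Set Function Filter

set_option linter.unusedSectionVars false
set_option maxHeartbeats 1000000

namespace HL

variable {E : Type*} [NormedAddCommGroup E] [NormedSpace ℝ E] [FiniteDimensional ℝ E]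
variable {h : E → E}

noncomputable def eqv {x : E} (hu : IsUnit (fderiv ℝ h x)) : E ≃L[ℝ] E :=
  ContinuousLinearEquiv.ofUnit hu.unit

lemma eqv_coe {x : E} (hu : IsUnit (fderiv ℝ h x)) :
    (eqv hu : E →L[ℝ] E) = fderiv ℝ h x := hu.unit_spec

lemma eqv_symm_coe {x : E} (hu : IsUnit (fderiv ℝ h x)) :
    ((eqv hu).symm : E →L[ℝ] E) = Ring.inverse (fderiv ℝ h x) := by
  rw [← hu.unit_spec, Ring.inverse_unit]; rfl

lemma strictDeriv (hC1 : ContDiff ℝ 1 h) {x : E} (hu : IsUnit (fderiv ℝ h x)) :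
    HasStrictFDerivAt h (eqv hu : E →L[ℝ] E) x := by
  rw [eqv_coe]
  exact hC1.contDiffAt.hasStrictFDerivAt one_ne_zero

/-- Any continuous lift of a segment is differentiable with explicit derivative. -/
lemma lift_hasDeriv (hC1 : ContDiff ℝ 1 h) (hinv : ∀ x, IsUnit (fderiv ℝ h x))
    {T : ℝ} {γ : ℝ → E} {w v : E}
    (hγc : ContinuousOn γ (Icc 0 T))
    (hlift : ∀ t ∈ Icc 0 T, h (γ t) = w + t • v)
    {t : ℝ} (ht : t ∈ Icc 0 T) :
    HasDerivWithinAt γ (Ring.inverse (fderiv ℝ h (γ t)) v) (Icc 0 T) t := by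
  set z := γ t with hz
  have hs := strictDeriv hC1 (hinv z)
  set g := hs.localInverse h _ z with hg
  have hev : ∀ᶠ x in nhds z, g (h x) = x := hs.eventually_left_inverse
  have htend : Tendsto γ (nhdsWithin t (Icc 0 T)) (nhds z) := hγc.continuousWithinAt ht
  have heq : ∀ᶠ s in nhdsWithin t (Icc 0 T), γ s = g (w + s • v) := by
    filter_upwards [htend.eventually hev, self_mem_nhdsWithin] with s hs1 hs2
    rw [← hlift s hs2, hs1]
  have hp : HasDerivAt (fun s : ℝ => w + s • v) v t := by
    simpa using ((hasDerivAt_id t).smul_const v).const_add w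
  have hgd : HasFDerivAt g ((eqv (hinv z)).symm : E →L[ℝ] E) (h z) :=
    hs.to_localInverse.hasFDerivAt
  rw [hlift t ht] at hgd
  have hcomp : HasDerivWithinAt (fun s => g (w + s • v))
      (((eqv (hinv z)).symm : E →L[ℝ] E) v) (Icc 0 T) t :=
    (hgd.comp_hasDerivWithinAt t hp.hasDerivWithinAt)
  have : HasDerivWithinAt γ (((eqv (hinv z)).symm : E →L[ℝ] E) v) (Icc 0 T) t := by
    refine hcomp.congr_of_eventuallyEq heq ?_
    have := heq.self_of_nhdsWithin ht
    exact this
  rwa [eqv_symm_coe] at this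

/-- Lifts of segments are Lipschitz with constant `C * ‖v‖`. -/
lemma lift_lipschitz (hC1 : ContDiff ℝ 1 h) (hinv : ∀ x, IsUnit (fderiv ℝ h x))
    {C : ℝ} (hbdd : ∀ x, ‖Ring.inverse (fderiv ℝ h x)‖ ≤ C)
    {T : ℝ} {γ : ℝ → E} {w v : E}
    (hγc : ContinuousOn γ (Icc 0 T))
    (hlift : ∀ t ∈ Icc 0 T, h (γ t) = w + t • v)
    {s t : ℝ} (hs : 0 ≤ s) (hst : s ≤ t) (ht : t ≤ T) :
    ‖γ t - γ s‖ ≤ C * ‖v‖ * (t - s) := by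
  have hsub : Icc s t ⊆ Icc 0 T := Icc_subset_Icc hs ht
  have hd : ∀ u ∈ Icc s t, HasDerivWithinAt γ (Ring.inverse (fderiv ℝ h (γ u)) v) (Icc s t) u :=
    fun u hu => (lift_hasDeriv hC1 hinv hγc hlift (hsub hu)).mono hsub
  have hbound : ∀ u ∈ Ico s t, ‖Ring.inverse (fderiv ℝ h (γ u)) v‖ ≤ C * ‖v‖ := by
    intro u hu
    calc ‖Ring.inverse (fderiv ℝ h (γ u)) v‖
        ≤ ‖Ring.inverse (fderiv ℝ h (γ u))‖ * ‖v‖ := ContinuousLinearMap.le_opNorm _ _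
      _ ≤ C * ‖v‖ := mul_le_mul_of_nonneg_right (hbdd _) (norm_nonneg _)
  exact norm_image_sub_le_of_norm_deriv_le_segment' hd hbound t (right_mem_Icc.2 hst)



lemma lower_bound {C : ℝ} (hinv : ∀ x, IsUnit (fderiv ℝ h x))
    (hbdd : ∀ x, ‖Ring.inverse (fderiv ℝ h x)‖ ≤ C) (x u : E) :
    ‖u‖ ≤ C * ‖fderiv ℝ h x u‖ := by
  have h1 : Ring.inverse (fderiv ℝ h x) (fderiv ℝ h x u) = u := by
    have h2 := Ring.inverse_mul_cancel _ (hinv x)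
    calc Ring.inverse (fderiv ℝ h x) (fderiv ℝ h x u)
        = (Ring.inverse (fderiv ℝ h x) * fderiv ℝ h x) u := rfl
      _ = u := by rw [h2]; rfl
  calc ‖u‖ = ‖Ring.inverse (fderiv ℝ h x) (fderiv ℝ h x u)‖ := by rw [h1]
    _ ≤ ‖Ring.inverse (fderiv ℝ h x)‖ * ‖fderiv ℝ h x u‖ :=
        ContinuousLinearMap.le_opNorm _ _
    _ ≤ C * ‖fderiv ℝ h x u‖ :=
        mul_le_mul_of_nonneg_right (hbdd x) (norm_nonneg _)

/-- Uniform quantitative injectivity estimate on a ball of radius `R`. -/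
lemma colip (hC1 : ContDiff ℝ 1 h) (hinv : ∀ x, IsUnit (fderiv ℝ h x))
    {C : ℝ} (hC : 1 ≤ C) (hbdd : ∀ x, ‖Ring.inverse (fderiv ℝ h x)‖ ≤ C) (R : ℝ) :
    ∃ r > 0, ∀ x z : E, ‖x‖ ≤ R → ‖z - x‖ ≤ r →
      ‖z - x‖ ≤ 2 * C * ‖h z - h x‖ := by
  have hC0 : 0 < C := lt_of_lt_of_le one_pos hC
  have hfc : Continuous (fderiv ℝ h) := hC1.continuous_fderiv one_ne_zero
  have hK : IsCompact (Metric.closedBall (0 : E) (R + 1)) := isCompact_closedBall _ _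
  have huc : UniformContinuousOn (fderiv ℝ h) (Metric.closedBall (0 : E) (R + 1)) :=
    hK.uniformContinuousOn_of_continuous hfc.continuousOn
  rw [Metric.uniformContinuousOn_iff] at huc
  obtain ⟨δ, hδ, hδ'⟩ := huc (1 / (2 * C)) (by positivity)
  refine ⟨min (δ / 2) 1, lt_min (by linarith) one_pos, fun x z hx hz => ?_⟩
  set r := min (δ / 2) 1 with hr
  have hr1 : r ≤ 1 := min_le_right _ _
  have hrδ : r < δ := lt_of_le_of_lt (min_le_left _ _) (by linarith)
  -- on the ball `closedBall x r`, the derivative is close to `fderiv ℝ h x`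
  have hball : Metric.closedBall x r ⊆ Metric.closedBall (0 : E) (R + 1) := by
    intro ξ hξ
    rw [Metric.mem_closedBall] at hξ ⊢
    have : dist ξ 0 ≤ dist ξ x + dist x 0 := dist_triangle _ _ _
    have hx0 : dist x 0 ≤ R := by rwa [dist_zero_right]
    linarith
  have hbnd : ∀ ξ ∈ Metric.closedBall x r, ‖fderiv ℝ h ξ - fderiv ℝ h x‖ ≤ 1 / (2 * C) := by
    intro ξ hξ
    have hξK : ξ ∈ Metric.closedBall (0 : E) (R + 1) := hball hξ
    have hxK : x ∈ Metric.closedBall (0 : E) (R + 1) := by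
      rw [Metric.mem_closedBall, dist_zero_right]; linarith
    have hd : dist (fderiv ℝ h ξ) (fderiv ℝ h x) < 1 / (2 * C) := by
      apply hδ' ξ hξK x hxK
      rw [Metric.mem_closedBall] at hξ
      linarith
    rw [dist_eq_norm] at hd
    exact hd.le
  have hxmem : x ∈ Metric.closedBall x r :=
    Metric.mem_closedBall_self (le_min (by linarith) zero_le_one)
  have hzmem : z ∈ Metric.closedBall x r := by
    rw [Metric.mem_closedBall, dist_eq_norm]; exact hz
  have hest : ‖h z - h x - (fderiv ℝ h x) (z - x)‖ ≤ 1 / (2 * C) * ‖z - x‖ :=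
    (convex_closedBall x r).norm_image_sub_le_of_norm_fderiv_le'
      (fun ξ _ => (hC1.differentiable one_ne_zero).differentiableAt) hbnd hxmem hzmem
  have hlow : ‖z - x‖ ≤ C * ‖fderiv ℝ h x (z - x)‖ := lower_bound hinv hbdd x _
  have htri : ‖fderiv ℝ h x (z - x)‖ ≤ ‖h z - h x‖ + ‖h z - h x - fderiv ℝ h x (z - x)‖ := by
    have := norm_sub_le (h z - h x) (h z - h x - fderiv ℝ h x (z - x))
    simpa using this
  have : ‖z - x‖ ≤ C * ‖h z - h x‖ + C * (1 / (2 * C) * ‖z - x‖) := by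
    calc ‖z - x‖ ≤ C * ‖fderiv ℝ h x (z - x)‖ := hlow
      _ ≤ C * (‖h z - h x‖ + ‖h z - h x - fderiv ℝ h x (z - x)‖) :=
          mul_le_mul_of_nonneg_left htri hC0.le
      _ ≤ C * (‖h z - h x‖ + 1 / (2 * C) * ‖z - x‖) :=
          mul_le_mul_of_nonneg_left (by linarith) hC0.le
      _ = C * ‖h z - h x‖ + C * (1 / (2 * C) * ‖z - x‖) := by ring
  have hCne : C * (1 / (2 * C) * ‖z - x‖) = ‖z - x‖ / 2 := by
    field_simp
  rw [hCne] at this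
  linarith

/-- Stability of lifts: two lifts of close paths with close starting points stay close. -/
lemma stability {C : ℝ} (hC : 1 ≤ C)
    {R r : ℝ} (hr : 0 < r)
    (hcolip : ∀ x z : E, ‖x‖ ≤ R → ‖z - x‖ ≤ r → ‖z - x‖ ≤ 2 * C * ‖h z - h x‖)
    {T : ℝ} {γ₁ γ₂ p₁ p₂ : ℝ → E}
    (hc1 : ContinuousOn γ₁ (Icc 0 T)) (hc2 : ContinuousOn γ₂ (Icc 0 T))
    (hl1 : ∀ t ∈ Icc 0 T, h (γ₁ t) = p₁ t) (hl2 : ∀ t ∈ Icc 0 T, h (γ₂ t) = p₂ t)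
    (hb : ∀ t ∈ Icc 0 T, ‖γ₁ t‖ ≤ R)
    {ε : ℝ} (hε : 0 ≤ ε) (hεr : 2 * C * ε < r)
    (hp : ∀ t ∈ Icc 0 T, ‖p₁ t - p₂ t‖ ≤ ε)
    (h0 : ‖γ₁ 0 - γ₂ 0‖ ≤ r) :
    ∀ t ∈ Icc 0 T, ‖γ₁ t - γ₂ t‖ ≤ 2 * C * ε := by
  have hC0 : (0:ℝ) < C := lt_of_lt_of_le one_pos hC
  -- pointwise: if the gap is at most `r`, then it is at most `2Cε`
  have key : ∀ t ∈ Icc 0 T, ‖γ₁ t - γ₂ t‖ ≤ r → ‖γ₁ t - γ₂ t‖ ≤ 2 * C * ε := by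
    intro t ht hle
    have h1 : ‖γ₂ t - γ₁ t‖ ≤ 2 * C * ‖h (γ₂ t) - h (γ₁ t)‖ := by
      apply hcolip _ _ (hb t ht)
      rwa [norm_sub_rev]
    rw [hl1 t ht, hl2 t ht] at h1
    rw [norm_sub_rev]
    calc ‖γ₂ t - γ₁ t‖ ≤ 2 * C * ‖p₂ t - p₁ t‖ := h1
      _ ≤ 2 * C * ε := by
          apply mul_le_mul_of_nonneg_left _ (by linarith)
          rw [norm_sub_rev]; exact hp t ht
  intro t ht
  by_contra hcon
  push_neg at hcon
  have hT0 : (0:ℝ) ≤ T := ht.1.trans ht.2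
  have h0' : (0:ℝ) ∈ Icc (0:ℝ) T := ⟨le_rfl, hT0⟩
  have hφ0 : ‖γ₁ 0 - γ₂ 0‖ ≤ 2 * C * ε := key 0 h0' h0
  have hφt : r < ‖γ₁ t - γ₂ t‖ := by
    by_contra hle
    push_neg at hle
    exact absurd (key t ht hle) (not_le.2 hcon)
  -- IVT on [0, t]
  have hφc : ContinuousOn (fun s => ‖γ₁ s - γ₂ s‖) (Icc 0 t) := by
    apply ContinuousOn.norm
    exact (hc1.mono (Icc_subset_Icc le_rfl ht.2)).sub (hc2.mono (Icc_subset_Icc le_rfl ht.2))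
  have hmem : r ∈ Icc (‖γ₁ 0 - γ₂ 0‖) (‖γ₁ t - γ₂ t‖) := ⟨by linarith, hφt.le⟩
  obtain ⟨s, hs, hseq⟩ := intermediate_value_Icc ht.1 hφc hmem
  have hsT : s ∈ Icc 0 T := ⟨hs.1, hs.2.trans ht.2⟩
  simp only [] at hseq
  have := key s hsT (le_of_eq hseq)
  rw [hseq] at this
  linarith



lemma glueIcc {E : Type*} [NormedAddCommGroup E] {f g : ℝ → E} {a b c : ℝ}
    (hf : ContinuousOn f (Icc a b)) (hg : ContinuousOn g (Icc b c)) (hfg : f b = g b) :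
    ContinuousOn (fun t => if t ≤ b then f t else g t) (Icc a b ∪ Icc b c) := by
  intro x hx
  have h1 : ContinuousWithinAt (fun t => if t ≤ b then f t else g t) (Icc a b) x := by
    by_cases hxs : x ∈ Icc a b
    · exact ((hf x hxs).congr (fun t ht => if_pos ht.2) (if_pos hxs.2))
    · exact continuousWithinAt_of_notMem_closure (by rwa [isClosed_Icc.closure_eq])
  have h2 : ContinuousWithinAt (fun t => if t ≤ b then f t else g t) (Icc b c) x := by
    by_cases hxs : x ∈ Icc b c
    · refine (hg x hxs).congr (fun t ht => ?_) ?_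
      · by_cases htb : t ≤ b
        · have : t = b := le_antisymm htb ht.1
          rw [if_pos htb, this, hfg]
        · rw [if_neg htb]
      · by_cases hxb : x ≤ b
        · have : x = b := le_antisymm hxb hxs.1
          rw [if_pos hxb, this, hfg]
        · rw [if_neg hxb]
    · exact continuousWithinAt_of_notMem_closure (by rwa [isClosed_Icc.closure_eq])
  exact h1.union h2

/-- Existence of lifts of segments starting anywhere. -/
lemma lift_exists (hC1 : ContDiff ℝ 1 h) (hinv : ∀ x, IsUnit (fderiv ℝ h x))
    {C : ℝ} (hC : 1 ≤ C) (hbdd : ∀ x, ‖Ring.inverse (fderiv ℝ h x)‖ ≤ C)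
    (x₀ v : E) :
    ∃ γ : ℝ → E, ContinuousOn γ (Icc 0 1) ∧ γ 0 = x₀ ∧
      ∀ t ∈ Icc 0 1, h (γ t) = h x₀ + t • v := by
  have hC0 : (0:ℝ) < C := lt_of_lt_of_le one_pos hC
  have hCv : (0:ℝ) ≤ C * ‖v‖ := mul_nonneg hC0.le (norm_nonneg _)
  set p : ℝ → E := fun t => h x₀ + t • v with hp
  set A : Set ℝ := {T | T ∈ Icc (0:ℝ) 1 ∧ ∃ γ : ℝ → E, ContinuousOn γ (Icc 0 T) ∧ γ 0 = x₀ ∧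
      ∀ t ∈ Icc 0 T, h (γ t) = p t} with hA
  have h0A : (0:ℝ) ∈ A := by
    refine ⟨⟨le_rfl, zero_le_one⟩, fun _ => x₀, continuousOn_const, rfl, fun t ht => ?_⟩
    have ht0 : t = 0 := le_antisymm ht.2 ht.1
    simp [hp, ht0]
  have hbddA : BddAbove A := ⟨1, fun T hT => hT.1.2⟩
  set τ := sSup A with hτ
  have hτ0 : 0 ≤ τ := le_csSup hbddA h0A
  have hτ1 : τ ≤ 1 := csSup_le ⟨0, h0A⟩ (fun T hT => hT.1.2)
  -- downward closure
  have hdown : ∀ T ∈ A, ∀ T', 0 ≤ T' → T' ≤ T → T' ∈ A := by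
    rintro T ⟨⟨hT0, hT1⟩, γ, hγc, hγ0, hγl⟩ T' hT'0 hT'T
    exact ⟨⟨hT'0, hT'T.trans hT1⟩, γ, hγc.mono (Icc_subset_Icc le_rfl hT'T), hγ0,
      fun t ht => hγl t ⟨ht.1, ht.2.trans hT'T⟩⟩
  -- all lifts stay in a fixed ball
  set R : ℝ := ‖x₀‖ + C * ‖v‖ with hR
  have hlift_bd : ∀ T, T ≤ 1 → ∀ γ : ℝ → E, ContinuousOn γ (Icc 0 T) → γ 0 = x₀ →
      (∀ t ∈ Icc 0 T, h (γ t) = p t) → ∀ t ∈ Icc 0 T, ‖γ t‖ ≤ R := by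
    intro T hT1 γ hγc hγ0 hγl t ht
    have := lift_lipschitz hC1 hinv hbdd hγc hγl le_rfl ht.1 ht.2
    rw [hγ0] at this
    have h2 : ‖γ t‖ - ‖x₀‖ ≤ ‖γ t - x₀‖ := norm_sub_norm_le _ _
    have h3 : C * ‖v‖ * (t - 0) ≤ C * ‖v‖ * 1 := by
      apply mul_le_mul_of_nonneg_left _ hCv
      have := ht.2.trans hT1
      linarith
    simp only [sub_zero] at this h3
    calc ‖γ t‖ ≤ ‖x₀‖ + ‖γ t - x₀‖ := by
          have := norm_add_le x₀ (γ t - x₀); simpa using this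
      _ ≤ ‖x₀‖ + C * ‖v‖ * 1 := by linarith
      _ = R := by rw [hR]; ring
  obtain ⟨r, hr, hcolip⟩ := colip hC1 hinv hC hbdd R
  -- uniqueness of lifts
  have huniq : ∀ T, 0 ≤ T → T ≤ 1 → ∀ γ₁ γ₂ : ℝ → E,
      ContinuousOn γ₁ (Icc 0 T) → γ₁ 0 = x₀ → (∀ t ∈ Icc 0 T, h (γ₁ t) = p t) →
      ContinuousOn γ₂ (Icc 0 T) → γ₂ 0 = x₀ → (∀ t ∈ Icc 0 T, h (γ₂ t) = p t) →
      ∀ t ∈ Icc 0 T, γ₁ t = γ₂ t := by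
    intro T hT0 hT1 γ₁ γ₂ hc1 h01 hl1 hc2 h02 hl2 t ht
    have := stability hC hr hcolip hc1 hc2 hl1 hl2
      (hlift_bd T hT1 γ₁ hc1 h01 hl1) le_rfl (by simpa using hr) (fun t _ => by simp)
      (by rw [h01, h02]; simpa using hr.le) t ht
    have h2 : ‖γ₁ t - γ₂ t‖ ≤ 0 := by simpa using this
    have := norm_nonneg (γ₁ t - γ₂ t)
    have : ‖γ₁ t - γ₂ t‖ = 0 := le_antisymm h2 this
    rwa [norm_eq_zero, sub_eq_zero] at this
  -- the sup belongs to A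
  have hτA : τ ∈ A := by
    by_cases hmem : τ ∈ A
    · exact hmem
    · exfalso
      have hτpos : 0 < τ := by
        rcases eq_or_lt_of_le hτ0 with h | h
        · exact absurd (h ▸ h0A) hmem
        · exact h
      have hIco : ∀ t, 0 ≤ t → t < τ → t ∈ A := by
        intro t ht0 htτ
        obtain ⟨T, hTA, htT⟩ := exists_lt_of_lt_csSup ⟨0, h0A⟩ htτ
        exact hdown T hTA t ht0 htT.le
      classical
      set Γ : ℝ → E := fun t => if htA : t ∈ A then Classical.choose htA.2 t else x₀ with hΓ
      -- for T ∈ A, Γ agrees with the chosen lift for T on [0, T]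
      have hΓeq : ∀ T, ∀ hT : T ∈ A, ∀ t ∈ Icc (0:ℝ) T, Γ t = Classical.choose hT.2 t := by
        intro T hT t ht
        have htA : t ∈ A := hdown T hT t ht.1 ht.2
        obtain ⟨hc1, h01, hl1⟩ := Classical.choose_spec htA.2
        obtain ⟨hc2, h02, hl2⟩ := Classical.choose_spec hT.2
        have hsub : Icc (0:ℝ) t ⊆ Icc 0 T := Icc_subset_Icc le_rfl ht.2
        have := huniq t ht.1 (ht.2.trans hT.1.2) _ _ hc1 h01 hl1
          (hc2.mono hsub) h02 (fun s hs => hl2 s (hsub hs)) t ⟨ht.1, le_rfl⟩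
        rw [hΓ]
        simpa [dif_pos htA] using this
      have hΓlift : ∀ t, 0 ≤ t → t < τ → h (Γ t) = p t := by
        intro t ht0 htτ
        have htA : t ∈ A := hIco t ht0 htτ
        obtain ⟨hc1, h01, hl1⟩ := Classical.choose_spec htA.2
        rw [hΓeq t htA t ⟨ht0, le_rfl⟩]
        exact hl1 t ⟨ht0, le_rfl⟩
      have hΓ0 : Γ 0 = x₀ := by
        obtain ⟨hc1, h01, hl1⟩ := Classical.choose_spec h0A.2
        rw [hΓeq 0 h0A 0 ⟨le_rfl, le_rfl⟩]; exact h01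
      have hΓlip : ∀ s t, 0 ≤ s → s ≤ t → t < τ → ‖Γ t - Γ s‖ ≤ C * ‖v‖ * (t - s) := by
        intro s t hs0 hst htτ
        have htA : t ∈ A := hIco t (hs0.trans hst) htτ
        obtain ⟨hc1, h01, hl1⟩ := Classical.choose_spec htA.2
        rw [hΓeq t htA t ⟨hs0.trans hst, le_rfl⟩, hΓeq t htA s ⟨hs0, hst⟩]
        exact lift_lipschitz hC1 hinv hbdd hc1 hl1 hs0 hst le_rfl
      -- limit along a sequence increasing to τ
      set u : ℕ → ℝ := fun n => τ - τ / (n + 1) with hu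
      have hun_mem : ∀ n, 0 ≤ u n ∧ u n < τ := by
        intro n
        constructor
        · rw [hu]
          have h1 : τ / (n + 1) ≤ τ / 1 := by
            apply div_le_div_of_nonneg_left hτpos.le one_pos
            have : (0:ℝ) ≤ (n:ℝ) := Nat.cast_nonneg n
            linarith
          simp only [div_one] at h1
          simp only [sub_nonneg]
          exact h1
        · rw [hu]
          have : 0 < τ / (n + 1) := by positivity
          linarith
      have hutend : Tendsto u atTop (nhds τ) := by
        rw [hu]
        have h1 : Tendsto (fun n : ℕ => τ / (n + 1)) atTop (nhds 0) := by
          have := tendsto_one_div_add_atTop_nhds_zero_nat (𝕜 := ℝ)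
          have h2 := this.const_mul τ
          simp only [mul_one_div] at h2
          simpa using h2
        have := tendsto_const_nhds (x := τ) (f := atTop (α := ℕ)) |>.sub h1
        simpa using this
      have hucau : CauchySeq (fun n => Γ (u n)) := by
        refine cauchySeq_of_le_tendsto_0 (fun N => C * ‖v‖ * (τ / (N + 1))) ?_ ?_
        · intro n m N hn hm
          wlog hnm : u n ≤ u m generalizing n m
          · rw [dist_comm]
            exact this m n hm hn (le_of_not_ge hnm)
          have h1 : ‖Γ (u m) - Γ (u n)‖ ≤ C * ‖v‖ * (u m - u n) :=
            hΓlip (u n) (u m) (hun_mem n).1 hnm (hun_mem m).2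
          have h2 : u m - u n ≤ τ / (N + 1) := by
            rw [hu]
            simp only [sub_sub_sub_cancel_left]
            have h3 : τ / (m + 1) ≤ τ / (n+1) := by
              apply div_le_div_of_nonneg_left hτpos.le (by positivity)
              have : (n:ℝ) ≤ (m:ℝ) := by
                by_contra hcon
                push_neg at hcon
                have := hu ▸ hnm
                have h4 : τ / (m+1) ≤ τ / (n+1) := by linarith [hu ▸ hnm]
                have h5 : τ / (n+1) < τ / (m+1) := by
                  apply div_lt_div_of_pos_left hτpos (by positivity)
                  linarith
                linarith
              linarith
            have h6 : τ / (n + 1) - τ / (m + 1) ≤ τ / (n+1) := by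
              have : 0 < τ / (m+1) := by positivity
              linarith
            have h7 : τ / (n+1) ≤ τ / (N+1) := by
              apply div_le_div_of_nonneg_left hτpos.le (by positivity)
              have : (N:ℝ) ≤ (n:ℝ) := Nat.cast_le.2 hn
              linarith
            calc τ / (n + 1) - τ / (m + 1) ≤ τ / (n+1) := h6
              _ ≤ τ / (N+1) := h7
          rw [dist_eq_norm, norm_sub_rev]
          calc ‖Γ (u m) - Γ (u n)‖ ≤ C * ‖v‖ * (u m - u n) := h1
            _ ≤ C * ‖v‖ * (τ / (N + 1)) := mul_le_mul_of_nonneg_left h2 hCv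
        · have h1 : Tendsto (fun N : ℕ => τ / (N + 1)) atTop (nhds 0) := by
            have := tendsto_one_div_add_atTop_nhds_zero_nat (𝕜 := ℝ)
            have h2 := this.const_mul τ
            simp only [mul_one_div] at h2
            simpa using h2
          have := h1.const_mul (C * ‖v‖)
          simpa using this
      obtain ⟨z, hz⟩ := cauchySeq_tendsto_of_complete hucau
      -- the extended lift
      set γ' : ℝ → E := fun t => if t < τ then Γ t else z with hγ'
      have hγ'lip : ∀ s t, 0 ≤ s → s ≤ t → t ≤ τ → ‖γ' t - γ' s‖ ≤ C * ‖v‖ * (t - s) := by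
        intro s t hs0 hst htτ
        rcases lt_or_eq_of_le htτ with htlt | hteq
        · have hslt : s < τ := lt_of_le_of_lt hst htlt
          rw [hγ']
          simp only [if_pos htlt, if_pos hslt]
          exact hΓlip s t hs0 hst htlt
        · subst hteq
          rcases lt_or_eq_of_le hst with hslt | hseq
          · rw [hγ']
            simp only [if_pos hslt, lt_irrefl, if_neg (lt_irrefl τ)]
            -- ‖z - Γ s‖ ≤ C‖v‖(t - s) by passing to the limit
            have hev : ∀ᶠ n in atTop, s ≤ u n := by
              have := hutend.eventually (eventually_gt_nhds hslt)
              filter_upwards [this] with n hn using hn.le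
            have h1 : Tendsto (fun n => ‖Γ (u n) - Γ s‖) atTop (nhds ‖z - Γ s‖) :=
              ((hz.sub_const (Γ s)).norm)
            have h2 : Tendsto (fun n => C * ‖v‖ * (u n - s)) atTop
                (nhds (C * ‖v‖ * (τ - s))) := ((hutend.sub_const s).const_mul _)
            refine le_of_tendsto_of_tendsto h1 h2 ?_
            filter_upwards [hev] with n hn
            exact hΓlip s (u n) hs0 hn (hun_mem n).2
          · subst hseq
            simp
      have hγ'c : ContinuousOn γ' (Icc 0 τ) := by
        have hKnn : (0:ℝ) ≤ C * ‖v‖ := hCv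
        apply LipschitzOnWith.continuousOn (K := Real.toNNReal (C * ‖v‖))
        apply LipschitzOnWith.of_dist_le_mul
        intro s hs t ht
        rw [Real.coe_toNNReal _ hKnn]
        rcases le_total t s with hts | hst
        · rw [dist_eq_norm, Real.dist_eq, abs_of_nonneg (by linarith : (0:ℝ) ≤ s - t)]
          exact hγ'lip t s ht.1 hts hs.2
        · rw [dist_eq_norm, norm_sub_rev, Real.dist_eq, abs_of_nonpos (by linarith : s - t ≤ 0)]
          have := hγ'lip s t hs.1 hst ht.2
          calc ‖γ' t - γ' s‖ ≤ C * ‖v‖ * (t - s) := this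
            _ = C * ‖v‖ * -(s - t) := by ring
      have hγ'0 : γ' 0 = x₀ := by
        rw [hγ']
        simp only [if_pos hτpos]
        exact hΓ0
      have hγ'lift : ∀ t ∈ Icc (0:ℝ) τ, h (γ' t) = p t := by
        intro t ht
        rcases lt_or_eq_of_le ht.2 with htlt | hteq
        · rw [hγ']
          simp only [if_pos htlt]
          exact hΓlift t ht.1 htlt
        · subst hteq
          rw [hγ']
          simp only [lt_irrefl, if_neg (lt_irrefl τ)]
          -- h z = p t by passing to the limit
          have h1 : Tendsto (fun n => h (Γ (u n))) atTop (nhds (h z)) :=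
            ((hC1.continuous.tendsto z).comp hz)
          have h2 : Tendsto (fun n => p (u n)) atTop (nhds (p τ)) := by
            have hpc : Continuous p := by
              rw [hp]; exact continuous_const.add (continuous_id.smul continuous_const)
            exact (hpc.tendsto τ).comp hutend
          have h3 : (fun n => h (Γ (u n))) = fun n => p (u n) := by
            funext n
            exact hΓlift (u n) (hun_mem n).1 (hun_mem n).2
          rw [h3] at h1
          exact tendsto_nhds_unique h1 h2
      exact hmem ⟨⟨hτ0, hτ1⟩, γ', hγ'c, hγ'0, hγ'lift⟩
  -- τ must equal 1
  have hτeq : τ = 1 := by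
    by_contra hne
    have hτlt : τ < 1 := lt_of_le_of_ne hτ1 hne
    obtain ⟨-, γ, hγc, hγ0, hγl⟩ := hτA
    set z := γ τ with hzdef
    have hs := strictDeriv hC1 (hinv z)
    set Φ := hs.toOpenPartialHomeomorph h with hΦ
    have hcoe : ⇑Φ = h := hs.toOpenPartialHomeomorph_coe
    have hz_src : z ∈ Φ.source := hs.mem_toOpenPartialHomeomorph_source
    have htarget : h z ∈ Φ.target := by
      rw [← hcoe]; exact Φ.map_source hz_src
    have hpz : p τ = h z := (hγl τ ⟨hτ0, le_rfl⟩).symm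
    have hpc : Continuous p := by
      rw [hp]; exact continuous_const.add (continuous_id.smul continuous_const)
    have hev : ∀ᶠ t in nhds τ, p t ∈ Φ.target := by
      apply hpc.continuousAt.eventually_mem
      rw [hpz]
      exact Φ.open_target.mem_nhds htarget
    rw [Metric.eventually_nhds_iff] at hev
    obtain ⟨ε, hε, hev⟩ := hev
    set T' := min (τ + ε / 2) 1 with hT'
    have hτT' : τ < T' := lt_min (by linarith) hτlt
    have hT'1 : T' ≤ 1 := min_le_right _ _
    have hT'0 : 0 ≤ T' := le_trans hτ0 hτT'.le
    have hmem_target : ∀ t, τ ≤ t → t ≤ T' → p t ∈ Φ.target := by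
      intro t ht1 ht2
      by_cases hteq : t = τ
      · rw [hteq, hpz]; exact htarget
      · apply hev
        rw [Real.dist_eq, abs_of_nonneg (by linarith : (0:ℝ) ≤ t - τ)]
        have : t ≤ τ + ε / 2 := ht2.trans (min_le_left _ _)
        linarith
    set γ'' : ℝ → E := fun t => if t ≤ τ then γ t else Φ.symm (p t) with hγ''
    have hjoin : γ τ = Φ.symm (p τ) := by
      rw [hpz, ← hcoe]
      exact (Φ.left_inv hz_src).symm
    have hc2 : ContinuousOn (fun t => Φ.symm (p t)) (Icc τ T') := by
      apply Φ.continuousOn_symm.comp hpc.continuousOn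
      intro t ht
      exact hmem_target t ht.1 ht.2
    have hγ''c : ContinuousOn γ'' (Icc 0 T') := by
      have := glueIcc (E := E) hγc hc2 hjoin
      have hsub : Icc (0:ℝ) T' ⊆ Icc 0 τ ∪ Icc τ T' := by
        intro t ht
        rcases le_total t τ with h1 | h1
        · exact Or.inl ⟨ht.1, h1⟩
        · exact Or.inr ⟨h1, ht.2⟩
      exact this.mono hsub
    have hγ''0 : γ'' 0 = x₀ := by
      rw [hγ'']; simp only [if_pos hτ0]; exact hγ0
    have hγ''l : ∀ t ∈ Icc (0:ℝ) T', h (γ'' t) = p t := by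
      intro t ht
      by_cases htτ : t ≤ τ
      · simp only [hγ'', if_pos htτ]; exact hγl t ⟨ht.1, htτ⟩
      · simp only [hγ'', if_neg htτ]
        push_neg at htτ
        have := hmem_target t htτ.le ht.2
        rw [← hcoe]
        exact Φ.right_inv this
    have hT'A : T' ∈ A := ⟨⟨hT'0, hT'1⟩, γ'', hγ''c, hγ''0, hγ''l⟩
    have := le_csSup hbddA hT'A
    rw [← hτ] at this
    linarith
  rw [hτeq] at hτA
  obtain ⟨-, γ, hγc, hγ0, hγl⟩ := hτA
  exact ⟨γ, hγc, hγ0, hγl⟩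

end HL

/-- Hadamard–Lévy consequence: Let `h : ℝ^d → ℝ^d` be `C¹` with everywhere
invertible Jacobian `∇h(x) = fderiv ℝ h x`, such that `x ↦ (∇h(x))⁻¹` is bounded in operator
norm. Then `h` is a global `C¹`-diffeomorphism of `ℝ^d`: it is bijective with a `C¹` inverse. -/
theorem statement10 (d : ℕ) (hd : 1 ≤ d)
    (h : EuclideanSpace ℝ (Fin d) → EuclideanSpace ℝ (Fin d))
    (hC1 : ContDiff ℝ 1 h)
    (hinv : ∀ x, IsUnit (fderiv ℝ h x))
    (hbdd : ∃ C : ℝ, ∀ x, ‖Ring.inverse (fderiv ℝ h x)‖ ≤ C) :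
    Function.Bijective h ∧
    ∃ g : EuclideanSpace ℝ (Fin d) → EuclideanSpace ℝ (Fin d),
      Function.LeftInverse g h ∧ Function.RightInverse g h ∧ ContDiff ℝ 1 g := by
  classical
  obtain ⟨C₀, hb0⟩ := hbdd
  set C : ℝ := max C₀ 1 with hCdef
  have hC : 1 ≤ C := le_max_right _ _
  have hC0 : (0:ℝ) < C := lt_of_lt_of_le one_pos hC
  have hbdd' : ∀ x, ‖Ring.inverse (fderiv ℝ h x)‖ ≤ C := fun x => (hb0 x).trans (le_max_left _ _)
  -- surjectivity
  have hsurj : Function.Surjective h := by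
    intro y
    obtain ⟨γ, hc, h0, hl⟩ := HL.lift_exists hC1 hinv hC hbdd' 0 (y - h 0)
    refine ⟨γ 1, ?_⟩
    have := hl 1 ⟨zero_le_one, le_rfl⟩
    rw [this]
    simp
  -- injectivity
  have hinj : Function.Injective h := by
    intro a b hab
    set y := h a with hy
    set c : ℝ → EuclideanSpace ℝ (Fin d) := fun s => a + s • (b - a) with hc
    have hccont : Continuous c := continuous_const.add (continuous_id.smul continuous_const)
    have hc0 : c 0 = a := by simp [hc]
    have hc1 : c 1 = b := by simp [hc]
    choose Γ hΓc hΓ0 hΓl using fun s : ℝ =>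
      HL.lift_exists hC1 hinv hC hbdd' (c s) (y - h (c s))
    set e : ℝ → EuclideanSpace ℝ (Fin d) := fun s => Γ s 1 with he
    have hefib : ∀ s, h (e s) = y := by
      intro s
      have := hΓl s 1 ⟨zero_le_one, le_rfl⟩
      rw [he]
      rw [this]
      simp
    -- a uniform bound on all the lifts for s ∈ [0,1]
    obtain ⟨M, hM⟩ := (isCompact_Icc (a := (0:ℝ)) (b := 1)).exists_bound_of_continuousOn
      (hC1.continuous.comp hccont).continuousOn
    set R : ℝ := (‖a‖ + ‖b - a‖) + C * (‖y‖ + M) with hRdef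
    have hvb : ∀ s ∈ Icc (0:ℝ) 1, ‖y - h (c s)‖ ≤ ‖y‖ + M := by
      intro s hs
      calc ‖y - h (c s)‖ ≤ ‖y‖ + ‖h (c s)‖ := norm_sub_le _ _
        _ ≤ ‖y‖ + M := by
            have := hM s hs
            simp only [Function.comp_apply] at this
            linarith
    have hcb : ∀ s ∈ Icc (0:ℝ) 1, ‖c s‖ ≤ ‖a‖ + ‖b - a‖ := by
      intro s hs
      calc ‖c s‖ ≤ ‖a‖ + ‖s • (b - a)‖ := norm_add_le _ _
        _ = ‖a‖ + |s| * ‖b - a‖ := by rw [norm_smul, Real.norm_eq_abs]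
        _ ≤ ‖a‖ + 1 * ‖b - a‖ := by
            have h1 : |s| ≤ 1 := abs_le.2 ⟨by linarith [hs.1], hs.2⟩
            have := mul_le_mul_of_nonneg_right h1 (norm_nonneg (b - a))
            linarith
        _ = ‖a‖ + ‖b - a‖ := by ring
    have hRb : ∀ s ∈ Icc (0:ℝ) 1, ∀ t ∈ Icc (0:ℝ) 1, ‖Γ s t‖ ≤ R := by
      intro s hs t ht
      have hlip := HL.lift_lipschitz hC1 hinv hbdd' (hΓc s) (hΓl s) le_rfl ht.1 ht.2
      rw [hΓ0 s] at hlip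
      have h1 : C * ‖y - h (c s)‖ * (t - 0) ≤ C * (‖y‖ + M) := by
        have h2 : C * ‖y - h (c s)‖ * (t - 0) ≤ C * ‖y - h (c s)‖ * 1 := by
          apply mul_le_mul_of_nonneg_left _ (mul_nonneg hC0.le (norm_nonneg _))
          linarith [ht.2]
        have h3 : C * ‖y - h (c s)‖ ≤ C * (‖y‖ + M) :=
          mul_le_mul_of_nonneg_left (hvb s hs) hC0.le
        linarith
      calc ‖Γ s t‖ ≤ ‖c s‖ + ‖Γ s t - c s‖ := by
            have := norm_add_le (c s) (Γ s t - c s); simpa using this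
        _ ≤ (‖a‖ + ‖b - a‖) + C * (‖y‖ + M) := by
            have := hcb s hs; linarith
        _ = R := hRdef.symm
    obtain ⟨r, hr, hcolip⟩ := HL.colip hC1 hinv hC hbdd' R
    -- fixed endpoints
    have hconstlift : ∀ s₀ ∈ Icc (0:ℝ) 1, h (c s₀) = y → e s₀ = c s₀ := by
      intro s₀ hs₀ hcy
      have hl2 : ∀ t ∈ Icc (0:ℝ) 1, h ((fun _ : ℝ => c s₀) t) =
          h (c s₀) + t • (y - h (c s₀)) := by
        intro t _
        rw [hcy]
        simp
      have hstab := HL.stability hC hr hcolip (hΓc s₀) (continuousOn_const (c := c s₀))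
        (hΓl s₀) hl2 (hRb s₀ hs₀) le_rfl (by simpa using hr)
        (fun t _ => by simp) (by rw [hΓ0 s₀]; simpa using hr.le) 1 ⟨zero_le_one, le_rfl⟩
      have h2 : ‖Γ s₀ 1 - c s₀‖ ≤ 0 := by simpa using hstab
      have h3 : ‖Γ s₀ 1 - c s₀‖ = 0 := le_antisymm h2 (norm_nonneg _)
      rw [he]
      rwa [norm_eq_zero, sub_eq_zero] at h3
    have he0 : e 0 = a := by rw [hconstlift 0 ⟨le_rfl, zero_le_one⟩ (by rw [hc0]), hc0]
    have he1 : e 1 = b := by rw [hconstlift 1 ⟨zero_le_one, le_rfl⟩ (by rw [hc1, hab]), hc1]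
    -- local constancy of the endpoint map
    have hloc : ∀ s₀ ∈ Icc (0:ℝ) 1, ∃ δ > 0, ∀ s ∈ Icc (0:ℝ) 1, |s - s₀| < δ → e s = e s₀ := by
      intro s₀ hs₀
      set ε : ℝ := r / (4 * C) with hε
      have hεpos : 0 < ε := by positivity
      have hεr : 2 * C * ε < r := by
        rw [hε]
        rw [div_eq_mul_inv]
        have : 2 * C * (r * (4 * C)⁻¹) = r / 2 := by field_simp; ring
        rw [this]
        linarith
      -- continuity of h ∘ c at s₀
      have hcont : ContinuousAt (fun s => h (c s)) s₀ := (hC1.continuous.comp hccont).continuousAt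
      rw [Metric.continuousAt_iff] at hcont
      obtain ⟨δ₂, hδ₂, hδ₂'⟩ := hcont ε hεpos
      set δ : ℝ := min δ₂ (r / (‖b - a‖ + 1)) with hδdef
      have hδpos : 0 < δ := lt_min hδ₂ (by positivity)
      refine ⟨δ, hδpos, fun s hs hss₀ => ?_⟩
      have hd1 : |s - s₀| < δ₂ := lt_of_lt_of_le hss₀ (min_le_left _ _)
      have hd2 : |s - s₀| < r / (‖b - a‖ + 1) := lt_of_lt_of_le hss₀ (min_le_right _ _)
      have hph : ‖h (c s) - h (c s₀)‖ ≤ ε := by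
        have := hδ₂' (by rwa [Real.dist_eq])
        rw [dist_eq_norm] at this
        exact this.le
      have hcclose : ‖c s - c s₀‖ ≤ r := by
        have h1 : c s - c s₀ = (s - s₀) • (b - a) := by
          rw [hc]; simp; module
        rw [h1, norm_smul, Real.norm_eq_abs]
        have h2 : |s - s₀| * (‖b - a‖ + 1) < r := by
          calc |s - s₀| * (‖b - a‖ + 1) < r / (‖b - a‖ + 1) * (‖b - a‖ + 1) := by
                apply mul_lt_mul_of_pos_right hd2 (by positivity)
            _ = r := by field_simp
        nlinarith [abs_nonneg (s - s₀), norm_nonneg (b - a)]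
      -- apply stability to the lifts at s₀ and s
      have hstab := HL.stability hC hr hcolip (hΓc s₀) (hΓc s) (hΓl s₀) (hΓl s)
        (hRb s₀ hs₀) hεpos.le hεr ?_ ?_ 1 ⟨zero_le_one, le_rfl⟩
      · -- conclude e s = e s₀ using the co-Lipschitz bound
        have h1 : ‖e s - e s₀‖ ≤ 2 * C * ε := by
          rw [he, norm_sub_rev]
          exact hstab
        have h2 : ‖e s - e s₀‖ ≤ r := h1.trans hεr.le
        have h3 : ‖e s₀‖ ≤ R := hRb s₀ hs₀ 1 ⟨zero_le_one, le_rfl⟩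
        have h4 : ‖e s - e s₀‖ ≤ 2 * C * ‖h (e s) - h (e s₀)‖ := hcolip _ _ h3 h2
        rw [hefib s, hefib s₀] at h4
        simp only [sub_self, norm_zero, mul_zero] at h4
        have h5 : ‖e s - e s₀‖ = 0 := le_antisymm h4 (norm_nonneg _)
        rwa [norm_eq_zero, sub_eq_zero] at h5
      · -- the two straight paths are uniformly ε-close
        intro t ht
        have h1 : (h (c s₀) + t • (y - h (c s₀))) - (h (c s) + t • (y - h (c s)))
            = (1 - t) • (h (c s₀) - h (c s)) := by module
        rw [h1, norm_smul, Real.norm_eq_abs]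
        have h2 : |1 - t| ≤ 1 := abs_le.2 ⟨by linarith [ht.2], by linarith [ht.1]⟩
        have h3 : ‖h (c s₀) - h (c s)‖ ≤ ε := by rwa [norm_sub_rev]
        nlinarith [norm_nonneg (h (c s₀) - h (c s))]
      · -- starting points are r-close
        rw [hΓ0 s₀, hΓ0 s, norm_sub_rev]
        exact hcclose
    -- the endpoint map is globally constant on [0,1]
    have hS : e 1 = e 0 := by
      set S : Set ℝ := {s | s ∈ Icc (0:ℝ) 1 ∧ e s = e 0} with hSdef
      have h0S : (0:ℝ) ∈ S := ⟨⟨le_rfl, zero_le_one⟩, rfl⟩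
      have hbddS : BddAbove S := ⟨1, fun s hs => hs.1.2⟩
      set σ := sSup S with hσ
      have hσ0 : 0 ≤ σ := le_csSup hbddS h0S
      have hσ1 : σ ≤ 1 := csSup_le ⟨0, h0S⟩ (fun s hs => hs.1.2)
      obtain ⟨δ, hδ, hδ'⟩ := hloc σ ⟨hσ0, hσ1⟩
      have hσS : σ ∈ S := by
        obtain ⟨s, hsS, hsσ⟩ := exists_lt_of_lt_csSup ⟨0, h0S⟩ (by linarith : σ - δ < σ)
        have hsle : s ≤ σ := le_csSup hbddS hsS
        have h1 : e σ = e s := by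
          have := hδ' s hsS.1 (by rw [abs_sub_lt_iff]; constructor <;> linarith)
          -- this : e s = e σ
          exact this.symm
        exact ⟨⟨hσ0, hσ1⟩, by rw [h1, hsS.2]⟩
      have hσeq : σ = 1 := by
        by_contra hne
        have hσlt : σ < 1 := lt_of_le_of_ne hσ1 hne
        set s' : ℝ := min (σ + δ / 2) 1 with hs'
        have hs'I : s' ∈ Icc (0:ℝ) 1 := ⟨le_trans hσ0 (le_min (by linarith) hσlt.le), min_le_right _ _⟩
        have hs'σ : σ < s' := lt_min (by linarith) hσlt
        have hs'close : |s' - σ| < δ := by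
          rw [abs_sub_lt_iff]
          constructor
          · have : s' ≤ σ + δ / 2 := min_le_left _ _
            linarith
          · linarith
        have : e s' = e σ := hδ' s' hs'I hs'close
        have hs'S : s' ∈ S := ⟨hs'I, by rw [this, hσS.2]⟩
        have := le_csSup hbddS hs'S
        rw [← hσ] at this
        linarith
      rw [← hσS.2, hσeq]
    rw [he0, he1] at hS
    exact hS.symm
  refine ⟨⟨hinj, hsurj⟩, Function.invFun h, Function.leftInverse_invFun hinj,
    Function.rightInverse_invFun hsurj, ?_⟩
  -- the global inverse is C¹
  rw [contDiff_iff_contDiffAt]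
  intro y
  set x := Function.invFun h y with hx
  have hyx : h x = y := Function.rightInverse_invFun hsurj y
  have hstrict := HL.strictDeriv hC1 (hinv x)
  have hloc : ContDiffAt ℝ 1 (hstrict.localInverse h _ x) (h x) := by
    have hf' : HasFDerivAt h ((HL.eqv (hinv x) : _ ≃L[ℝ] _) :
        EuclideanSpace ℝ (Fin d) →L[ℝ] EuclideanSpace ℝ (Fin d)) x := by
      rw [HL.eqv_coe]
      exact (hC1.differentiable one_ne_zero x).hasFDerivAt
    exact hC1.contDiffAt.to_localInverse hf' one_ne_zero
  have hev : ∀ᶠ y' in nhds (h x), Function.invFun h y' = hstrict.localInverse h _ x y' := by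
    filter_upwards [hstrict.eventually_right_inverse] with y' hy'
    have h1 : h (Function.invFun h y') = y' := Function.rightInverse_invFun hsurj y'
    exact hinj (h1.trans hy'.symm)
  have := hloc.congr_of_eventuallyEq hev
  rwa [hyx] at this
end
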